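/- arXiv:2010.16222 — 8 statements merged into one kernel-verified Lean document; each statement's English description precedes it below -/
import Mathlib

section
/- Let k ≥ 1 and let T be a symmetric rank-k tensor on ℝ^N. Suppose there exist a family of real numbers T'_{i₁…i_{k−1}} (indices in {1,…,N}, no symmetry assumed) and a nonzero vector u ∈ ℝ^N such that T_{i₁…i_k} = T'_{i₁…i_{k−1}} · u_{i_k} for all indices. Then there exists c ∈ ℝ such that T_{i₁…i_k} = c · u_{i₁} ⋯ u_{i_k} for all indices. -/
/-- A rank-`k` tensor on `ℝ^N` is symmetric if it is invariant under all
permutations of its indices. -/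
def IsSym {N k : ℕ} (T : (Fin k → Fin N) → ℝ) : Prop :=
  ∀ (σ : Equiv.Perm (Fin k)) (f : Fin k → Fin N), T (f ∘ σ) = T f

/-- if a symmetric rank-`(k+1)` tensor `T` (with `k + 1 ≥ 1`) can be
written as `T = T' ⊗ u` for some (not necessarily symmetric) rank-`k` family `T'`
and a nonzero vector `u`, then `T = c · u^{⊗(k+1)}` for some constant `c`. -/
theorem sym_tensor_factor {N k : ℕ} (hN : 1 ≤ N)
    (T : (Fin (k + 1) → Fin N) → ℝ) (hT : IsSym T)
    (T' : (Fin k → Fin N) → ℝ) (u : Fin N → ℝ) (hu : u ≠ 0)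
    (h : ∀ f : Fin (k + 1) → Fin N,
      T f = T' (fun t => f t.castSucc) * u (f (Fin.last k))) :
    ∃ c : ℝ, ∀ f : Fin (k + 1) → Fin N, T f = c * ∏ t, u (f t) := by
  obtain ⟨j, hj⟩ : ∃ j, u j ≠ 0 := by
    by_contra hc; push_neg at hc; exact hu (funext hc)
  -- Step lemma: replacing one index by `j` trades a factor of `u`.
  have step : ∀ (f : Fin (k+1) → Fin N) (i : Fin (k+1)),
      T (Function.update f i j) * u (f i) = T f * u j := by
    intro f i
    set σ : Equiv.Perm (Fin (k+1)) := Equiv.swap i (Fin.last k) with hσ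
    have hσl : σ (Fin.last k) = i := Equiv.swap_apply_right i (Fin.last k)
    have key : (fun t : Fin k => (f ∘ σ) t.castSucc) =
        (fun t : Fin k => (Function.update f i j ∘ σ) t.castSucc) := by
      funext t
      have ht : t.castSucc ≠ Fin.last k := (Fin.castSucc_lt_last t).ne
      by_cases hti : t.castSucc = i
      · have hil : i ≠ Fin.last k := hti ▸ ht
        simp only [Function.comp_apply, hti]
        rw [show σ i = Fin.last k from Equiv.swap_apply_left i (Fin.last k),
          Function.update_of_ne (Ne.symm hil)]
      · simp only [Function.comp_apply, hσ]
        rw [Equiv.swap_apply_of_ne_of_ne hti ht, Function.update_of_ne hti]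
    have e1 := h (f ∘ σ)
    have e2 := h (Function.update f i j ∘ σ)
    rw [hT σ f] at e1
    rw [hT σ (Function.update f i j)] at e2
    have l1 : (f ∘ σ) (Fin.last k) = f i := by simp [hσl]
    have l2 : (Function.update f i j ∘ σ) (Fin.last k) = j := by
      simp only [Function.comp_apply]
      rw [hσl, Function.update_self]
    rw [l1] at e1
    rw [l2, ← key] at e2
    rw [e1, e2]; ring
  -- Main induction: replace all indices in a finset by j.
  have main : ∀ (s : Finset (Fin (k+1))) (f : Fin (k+1) → Fin N),
      T (fun i => if i ∈ s then j else f i) * ∏ t ∈ s, u (f t)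
        = T f * u j ^ s.card := by
    intro s
    induction s using Finset.induction with
    | empty => intro f; simp
    | @insert a s ha ih =>
      intro f
      have hfun : (fun i => if i ∈ insert a s then j else f i)
          = Function.update (fun i => if i ∈ s then j else f i) a j := by
        funext i
        by_cases hia : i = a
        · subst hia; simp
        · simp [Function.update_of_ne hia, hia, Finset.mem_insert]
      rw [hfun, Finset.prod_insert ha, Finset.card_insert_of_notMem ha]
      have hga : (fun i => if i ∈ s then j else f i) a = f a := by simp [ha]
      calc T (Function.update (fun i => if i ∈ s then j else f i) a j)
            * (u (f a) * ∏ t ∈ s, u (f t))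
          = (T (Function.update (fun i => if i ∈ s then j else f i) a j)
            * u ((fun i => if i ∈ s then j else f i) a)) * ∏ t ∈ s, u (f t) := by
            rw [hga]; ring
        _ = (T (fun i => if i ∈ s then j else f i) * u j) * ∏ t ∈ s, u (f t) := by
            rw [step]
        _ = (T (fun i => if i ∈ s then j else f i) * ∏ t ∈ s, u (f t)) * u j := by ring
        _ = T f * u j ^ (s.card + 1) := by rw [ih f]; ring
  refine ⟨T (fun _ => j) / u j ^ (k+1), fun f => ?_⟩
  have := main Finset.univ f
  simp only [Finset.mem_univ, if_true, Finset.card_univ, Fintype.card_fin] at this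
  have hpow : u j ^ (k+1) ≠ 0 := pow_ne_zero _ hj
  field_simp
  linarith [this]
end

section
/- If λ is a one-loop fixed point on ℝ^N and λ is not identically zero, then ‖λ‖ ≥ 1/3. -/
/-- A quartic coupling on `ℝ^N`: a rank-4 tensor invariant under all
permutations of its four indices. -/
def IsSym4 {N : ℕ} (A : (Fin 4 → Fin N) → ℝ) : Prop :=
  ∀ (σ : Equiv.Perm (Fin 4)) (f : Fin 4 → Fin N), A (f ∘ σ) = A f

/-- The one-loop fixed point equation
`λ_{ijkl} = ∑_{m,n} (λ_{ijmn}λ_{klmn} + λ_{ikmn}λ_{jlmn} + λ_{ilmn}λ_{jkmn})`. -/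
def IsFixedPoint {N : ℕ} (A : (Fin 4 → Fin N) → ℝ) : Prop :=
  ∀ i j k l : Fin N, A ![i, j, k, l] =
    ∑ m : Fin N, ∑ n : Fin N,
      (A ![i, j, m, n] * A ![k, l, m, n] + A ![i, k, m, n] * A ![j, l, m, n]
        + A ![i, l, m, n] * A ![j, k, m, n])

/-- `‖λ‖² = ∑_{i,j,k,l} λ_{ijkl}²`. -/
def sqnorm {N : ℕ} (A : (Fin 4 → Fin N) → ℝ) : ℝ :=
  ∑ i : Fin N, ∑ j : Fin N, ∑ k : Fin N, ∑ l : Fin N, (A ![i, j, k, l]) ^ 2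

/-- `a₀(λ) = ∑_{i,j} λ_{iijj}`. -/
def a0 {N : ℕ} (A : (Fin 4 → Fin N) → ℝ) : ℝ :=
  ∑ i : Fin N, ∑ j : Fin N, A ![i, i, j, j]

/-- `t_{ij}(λ) = ∑_k λ_{ijkk}`. -/
def tmat {N : ℕ} (A : (Fin 4 → Fin N) → ℝ) (i j : Fin N) : ℝ :=
  ∑ k : Fin N, A ![i, j, k, k]

private lemma sum_perm2 {N : ℕ} (f g : Fin N → Fin N → ℝ) :
    ∑ i, ∑ j, ∑ k, ∑ l, f i k * g j l = (∑ i, ∑ k, f i k) * (∑ j, ∑ l, g j l) := by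
  calc ∑ i, ∑ j, ∑ k, ∑ l, f i k * g j l
      = ∑ i, ∑ j, (∑ k, f i k) * (∑ l, g j l) :=
        Finset.sum_congr rfl fun i _ => Finset.sum_congr rfl fun j _ =>
          (Finset.sum_mul_sum _ _ _ _).symm
    _ = (∑ i, ∑ k, f i k) * (∑ j, ∑ l, g j l) := (Finset.sum_mul_sum _ _ _ _).symm

private lemma sum_perm3 {N : ℕ} (f g : Fin N → Fin N → ℝ) :
    ∑ i, ∑ j, ∑ k, ∑ l, f i l * g j k = (∑ i, ∑ l, f i l) * (∑ j, ∑ k, g j k) := by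
  calc ∑ i, ∑ j, ∑ k, ∑ l, f i l * g j k
      = ∑ i, ∑ j, (∑ l, f i l) * (∑ k, g j k) := by
        refine Finset.sum_congr rfl fun i _ => Finset.sum_congr rfl fun j _ => ?_
        rw [Finset.sum_comm, ← Finset.sum_mul_sum]
    _ = (∑ i, ∑ l, f i l) * (∑ j, ∑ k, g j k) := (Finset.sum_mul_sum _ _ _ _).symm

private lemma aux_bound {N : ℕ} (B : Fin N → Fin N → Fin N → Fin N → ℝ)
    (hfp : ∀ i j k l, B i j k l =
      ∑ m, ∑ n, (B i j m n * B k l m n + B i k m n * B j l m n + B i l m n * B j k m n)) :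
    (∑ i, ∑ j, ∑ k, ∑ l, B i j k l ^ 2) ≤
      3 * ((∑ i, ∑ j, ∑ k, ∑ l, B i j k l ^ 2) *
        Real.sqrt (∑ i, ∑ j, ∑ k, ∑ l, B i j k l ^ 2)) := by
  classical
  set S : ℝ := ∑ i, ∑ j, ∑ k, ∑ l, B i j k l ^ 2 with hSdef
  set F : ((Fin N × Fin N) × (Fin N × Fin N)) → ℝ :=
    fun p => B p.1.1 p.1.2 p.2.1 p.2.2 with hF
  set R : Fin N × Fin N → ℝ := fun a => ∑ q : Fin N × Fin N, B a.1 a.2 q.1 q.2 ^ 2 with hR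
  set T1 : ((Fin N × Fin N) × (Fin N × Fin N)) → ℝ :=
    fun p => ∑ q : Fin N × Fin N, B p.1.1 p.1.2 q.1 q.2 * B p.2.1 p.2.2 q.1 q.2 with hT1
  set T2 : ((Fin N × Fin N) × (Fin N × Fin N)) → ℝ :=
    fun p => ∑ q : Fin N × Fin N, B p.1.1 p.2.1 q.1 q.2 * B p.1.2 p.2.2 q.1 q.2 with hT2
  set T3 : ((Fin N × Fin N) × (Fin N × Fin N)) → ℝ :=
    fun p => ∑ q : Fin N × Fin N, B p.1.1 p.2.2 q.1 q.2 * B p.1.2 p.2.1 q.1 q.2 with hT3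
  have hFsum : ∑ p, F p ^ 2 = S := by
    simp [hF, hSdef, Fintype.sum_prod_type]
  have hRsum : ∑ a, R a = S := by
    simp [hR, hSdef, Fintype.sum_prod_type]
  have hRcol : ∀ (h : Fin N → Fin N → ℝ), (∑ i, ∑ k, h i k) = ∑ a : Fin N × Fin N, h a.1 a.2 :=
    fun h => (Fintype.sum_prod_type (fun a : Fin N × Fin N => h a.1 a.2)).symm
  have hS0 : 0 ≤ S := by
    rw [← hFsum]; positivity
  have key : ∀ p, F p = T1 p + T2 p + T3 p := by
    rintro ⟨⟨i, j⟩, ⟨k, l⟩⟩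
    simpa [hF, hT1, hT2, hT3, Fintype.sum_prod_type, Finset.sum_add_distrib] using hfp i j k l
  -- channel sum-of-squares bounds
  have hsq1 : ∑ p, T1 p ^ 2 ≤ S ^ 2 := by
    have h1 : ∀ p : (Fin N × Fin N) × (Fin N × Fin N), T1 p ^ 2 ≤ R p.1 * R p.2 := by
      intro p
      exact Finset.sum_mul_sq_le_sq_mul_sq _ _ _
    calc ∑ p, T1 p ^ 2 ≤ ∑ p : (Fin N × Fin N) × (Fin N × Fin N), R p.1 * R p.2 :=
          Finset.sum_le_sum fun p _ => h1 p
      _ = (∑ a, R a) * (∑ a, R a) := by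
          rw [Finset.sum_mul_sum]; rw [Fintype.sum_prod_type]
      _ = S ^ 2 := by rw [hRsum, sq]
  have hsq2 : ∑ p, T2 p ^ 2 ≤ S ^ 2 := by
    have h1 : ∀ p : (Fin N × Fin N) × (Fin N × Fin N),
        T2 p ^ 2 ≤ R (p.1.1, p.2.1) * R (p.1.2, p.2.2) := by
      intro p
      exact Finset.sum_mul_sq_le_sq_mul_sq _ _ _
    calc ∑ p, T2 p ^ 2
        ≤ ∑ p : (Fin N × Fin N) × (Fin N × Fin N), R (p.1.1, p.2.1) * R (p.1.2, p.2.2) :=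
          Finset.sum_le_sum fun p _ => h1 p
      _ = ∑ i, ∑ j, ∑ k, ∑ l, R (i, k) * R (j, l) := by
          simp [Fintype.sum_prod_type]
      _ = (∑ a, R a) * (∑ a, R a) := by
          rw [sum_perm2 (fun i k => R (i, k)) (fun j l => R (j, l)),
            hRcol (fun i k => R (i, k))]
      _ = S ^ 2 := by rw [hRsum, sq]
  have hsq3 : ∑ p, T3 p ^ 2 ≤ S ^ 2 := by
    have h1 : ∀ p : (Fin N × Fin N) × (Fin N × Fin N),
        T3 p ^ 2 ≤ R (p.1.1, p.2.2) * R (p.1.2, p.2.1) := by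
      intro p
      exact Finset.sum_mul_sq_le_sq_mul_sq _ _ _
    calc ∑ p, T3 p ^ 2
        ≤ ∑ p : (Fin N × Fin N) × (Fin N × Fin N), R (p.1.1, p.2.2) * R (p.1.2, p.2.1) :=
          Finset.sum_le_sum fun p _ => h1 p
      _ = ∑ i, ∑ j, ∑ k, ∑ l, R (i, l) * R (j, k) := by
          simp [Fintype.sum_prod_type]
      _ = (∑ a, R a) * (∑ a, R a) := by
          rw [sum_perm3 (fun i l => R (i, l)) (fun j k => R (j, k)),
            hRcol (fun i l => R (i, l))]
      _ = S ^ 2 := by rw [hRsum, sq]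
  -- each channel contribution
  have chan : ∀ T : ((Fin N × Fin N) × (Fin N × Fin N)) → ℝ,
      (∑ p, T p ^ 2 ≤ S ^ 2) → ∑ p, F p * T p ≤ S * Real.sqrt S := by
    intro T hTb
    have hcs := Finset.sum_mul_sq_le_sq_mul_sq Finset.univ F T
    rw [hFsum] at hcs
    have h2 : (∑ p, F p * T p) ^ 2 ≤ S * S ^ 2 :=
      hcs.trans (by nlinarith [hS0])
    have h3 : (∑ p, F p * T p) ≤ Real.sqrt (S * S ^ 2) := by
      calc (∑ p, F p * T p) ≤ |∑ p, F p * T p| := le_abs_self _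
        _ = Real.sqrt ((∑ p, F p * T p) ^ 2) := (Real.sqrt_sq_eq_abs _).symm
        _ ≤ Real.sqrt (S * S ^ 2) := Real.sqrt_le_sqrt h2
    have h4 : Real.sqrt (S * S ^ 2) = S * Real.sqrt S := by
      rw [Real.sqrt_mul hS0, Real.sqrt_sq hS0]; ring
    rwa [h4] at h3
  have hsplit : S = (∑ p, F p * T1 p) + (∑ p, F p * T2 p) + (∑ p, F p * T3 p) := by
    rw [← Finset.sum_add_distrib, ← Finset.sum_add_distrib, ← hFsum]
    refine Finset.sum_congr rfl fun p _ => ?_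
    rw [sq, key p]; ring
  calc S = (∑ p, F p * T1 p) + (∑ p, F p * T2 p) + (∑ p, F p * T3 p) := hsplit
    _ ≤ S * Real.sqrt S + S * Real.sqrt S + S * Real.sqrt S := by
        gcongr ?_ + ?_ + ?_
        exacts [chan T1 hsq1, chan T2 hsq2, chan T3 hsq3]
    _ = 3 * (S * Real.sqrt S) := by ring

set_option maxHeartbeats 1000000 in
/-- any nonzero one-loop fixed point has `‖λ‖ ≥ 1/3`. -/
theorem fixedPoint_norm_lower_bound {N : ℕ} (hN : 1 ≤ N)
    (A : (Fin 4 → Fin N) → ℝ) (hA : IsSym4 A) (hfp : IsFixedPoint A)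
    (hne : A ≠ 0) :
    (1 : ℝ) / 3 ≤ Real.sqrt (sqnorm A) := by
  set S : ℝ := sqnorm A with hSdef
  have haux : S ≤ 3 * (S * Real.sqrt S) :=
    aux_bound (fun i j k l => A ![i, j, k, l]) hfp
  have step : ∀ (g : Fin N → ℝ) (i : Fin N), (∀ x, 0 ≤ g x) → g i ≤ ∑ x, g x :=
    fun g i h => Finset.single_le_sum (fun x _ => h x) (Finset.mem_univ i)
  have hSpos : 0 < S := by
    obtain ⟨f, hf⟩ := Function.ne_iff.mp hne
    have hfe : ![f 0, f 1, f 2, f 3] = f := by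
      funext x; fin_cases x <;> rfl
    have h0 : 0 < (A ![f 0, f 1, f 2, f 3]) ^ 2 := by
      rw [hfe]
      exact lt_of_le_of_ne (sq_nonneg _) (Ne.symm (pow_ne_zero _ hf))
    have hle : (A ![f 0, f 1, f 2, f 3]) ^ 2 ≤ S := by
      calc (A ![f 0, f 1, f 2, f 3]) ^ 2
          ≤ ∑ l, (A ![f 0, f 1, f 2, l]) ^ 2 :=
            step (fun l => (A ![f 0, f 1, f 2, l]) ^ 2) (f 3) (fun x => sq_nonneg _)
        _ ≤ ∑ k, ∑ l, (A ![f 0, f 1, k, l]) ^ 2 :=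
            step (fun k => ∑ l, (A ![f 0, f 1, k, l]) ^ 2) (f 2) (fun x => Finset.sum_nonneg fun _ _ => sq_nonneg _)
        _ ≤ ∑ j, ∑ k, ∑ l, (A ![f 0, j, k, l]) ^ 2 :=
            step (fun j => ∑ k, ∑ l, (A ![f 0, j, k, l]) ^ 2) (f 1) (fun x => Finset.sum_nonneg fun _ _ =>
              Finset.sum_nonneg fun _ _ => sq_nonneg _)
        _ ≤ ∑ i, ∑ j, ∑ k, ∑ l, (A ![i, j, k, l]) ^ 2 :=
            step (fun i => ∑ j, ∑ k, ∑ l, (A ![i, j, k, l]) ^ 2) (f 0) (fun x => Finset.sum_nonneg fun _ _ =>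
              Finset.sum_nonneg fun _ _ => Finset.sum_nonneg fun _ _ => sq_nonneg _)
        _ = S := rfl
    exact lt_of_lt_of_le h0 hle
  have h1 : 1 ≤ 3 * Real.sqrt S := by
    have := (mul_le_mul_iff_right₀ hSpos).mp (by linarith : S * 1 ≤ S * (3 * Real.sqrt S))
    linarith
  linarith
end

section
/- If λ is a one-loop fixed point on ℝ^N with ‖λ‖ = 1/3, then there exists a unit vector u ∈ ℝ^N such that λ_{ijkl} = (1/3) u_i u_j u_k u_l for all i,j,k,l; i.e. λ is the Wilson–Fisher coupling. -/
set_option maxHeartbeats 1000000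

section AuxSym
variable {N : ℕ} {A : (Fin 4 → Fin N) → ℝ}

lemma sA12 (hA : IsSym4 A) (i j k l : Fin N) : A ![i,j,k,l] = A ![i,k,j,l] := by
  have h := hA (Equiv.swap 1 2) ![i,j,k,l]
  have he : (![i,j,k,l]) ∘ (Equiv.swap (1:Fin 4) 2) = ![i,k,j,l] := by
    funext x; fin_cases x <;> simp [Equiv.swap_apply_def]
  rw [he] at h; exact h.symm

lemma sA23 (hA : IsSym4 A) (i j k l : Fin N) : A ![i,j,k,l] = A ![i,j,l,k] := by
  have h := hA (Equiv.swap 2 3) ![i,j,k,l]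
  have he : (![i,j,k,l]) ∘ (Equiv.swap (2:Fin 4) 3) = ![i,j,l,k] := by
    funext x; fin_cases x <;> simp [Equiv.swap_apply_def]
  rw [he] at h; exact h.symm

lemma sAflip (hA : IsSym4 A) (i j k l : Fin N) : A ![i,j,k,l] = A ![k,l,i,j] := by
  have h := hA (Equiv.swap (0:Fin 4) 2 * Equiv.swap (1:Fin 4) 3) ![i,j,k,l]
  have he : (![i,j,k,l]) ∘ (Equiv.swap (0:Fin 4) 2 * Equiv.swap (1:Fin 4) 3) = ![k,l,i,j] := by
    funext x; fin_cases x <;> simp [Equiv.swap_apply_def]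
  rw [he] at h; exact h.symm

end AuxSym

lemma sum3_cycle {α : Type*} [Fintype α] (G : α → α → α → ℝ) :
    ∑ a, ∑ b, ∑ c, G a b c = ∑ a, ∑ b, ∑ c, G c a b := by
  calc ∑ a, ∑ b, ∑ c, G a b c = ∑ b, ∑ a, ∑ c, G a b c := Finset.sum_comm
    _ = ∑ b, ∑ c, ∑ a, G a b c := Finset.sum_congr rfl (fun b _ => Finset.sum_comm)

lemma sub_sq_expand {ι : Type*} [Fintype ι] (f g : ι → ι → ℝ) :
    ∑ x, ∑ y, (f x y - g x y)^2 =
      (∑ x, ∑ y, (f x y)^2) - 2*(∑ x, ∑ y, f x y * g x y) + (∑ x, ∑ y, (g x y)^2) := by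
  have h : ∀ x y : ι, (f x y - g x y)^2 = (f x y)^2 - 2*(f x y * g x y) + (g x y)^2 := by
    intro x y; ring
  simp only [h, Finset.sum_add_distrib, Finset.sum_sub_distrib, ← Finset.mul_sum]

lemma rank_one_of {ι : Type*} [Fintype ι] (B : ι → ι → ℝ)
    (hsym : ∀ x y, B x y = B y x)
    (htr2 : ∑ x, ∑ y, (B x y)^2 = 1)
    (htr3 : ∑ x, ∑ y, ∑ z, B x y * B x z * B y z = 1) :
    ∃ v : ι → ℝ, (∑ x, (v x)^2 = 1) ∧ ∀ x y, B x y = v x * v y := by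
  classical
  set P : ι → ι → ℝ := fun x y => ∑ z, B x z * B y z with hPdef
  have hP4 : ∑ x, ∑ y, (P x y)^2 ≤ 1 := by
    have h1 : ∀ x y : ι, (P x y)^2 ≤ (∑ z, (B x z)^2) * (∑ z, (B y z)^2) := fun x y =>
      Finset.sum_mul_sq_le_sq_mul_sq _ _ _
    calc ∑ x, ∑ y, (P x y)^2 ≤ ∑ x, ∑ y, (∑ z, (B x z)^2) * (∑ z, (B y z)^2) := by
          refine Finset.sum_le_sum (fun x _ => Finset.sum_le_sum (fun y _ => h1 x y))
      _ = (∑ x, ∑ z, (B x z)^2) * (∑ y, ∑ z, (B y z)^2) := (Finset.sum_mul_sum _ _ _ _).symm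
      _ = 1 := by rw [htr2]; norm_num
  have hPB : ∑ x, ∑ y, P x y * B x y = 1 := by
    calc ∑ x, ∑ y, P x y * B x y = ∑ x, ∑ y, ∑ z, B x y * B x z * B y z := by
          refine Finset.sum_congr rfl (fun x _ => Finset.sum_congr rfl (fun y _ => ?_))
          rw [hPdef, Finset.sum_mul]
          exact Finset.sum_congr rfl (fun z _ => by ring)
      _ = 1 := htr3
  have hkey : ∑ x, ∑ y, (P x y - B x y)^2 = 0 := by
    have h := sub_sq_expand P B
    have hnn : (0:ℝ) ≤ ∑ x, ∑ y, (P x y - B x y)^2 := by positivity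
    rw [h, hPB, htr2] at *
    nlinarith [hP4, hnn, h]
  have hPeB : ∀ x y, P x y = B x y := by
    intro x y
    have h1 := (Finset.sum_eq_zero_iff_of_nonneg (fun x _ => by positivity)).mp hkey x (Finset.mem_univ x)
    have h2 := (Finset.sum_eq_zero_iff_of_nonneg (fun y _ => by positivity)).mp h1 y (Finset.mem_univ y)
    have := sq_eq_zero_iff.mp h2
    linarith [this]
  have htr1 : ∑ x, B x x = 1 := by
    calc ∑ x, B x x = ∑ x, ∑ z, (B x z)^2 := by
          refine Finset.sum_congr rfl (fun x _ => ?_)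
          rw [← hPeB x x, hPdef]
          exact Finset.sum_congr rfl (fun z _ => (sq (B x z)) ▸ by ring)
      _ = 1 := htr2
  have hex : ∃ p, B p p ≠ 0 := by
    by_contra h; push_neg at h
    rw [Finset.sum_congr rfl (fun x _ => h x)] at htr1
    simp at htr1
  obtain ⟨p, hp⟩ := hex
  have hcol : ∑ x, (B x p)^2 = B p p := by
    rw [← hPeB p p, hPdef]
    exact Finset.sum_congr rfl (fun z _ => by rw [hsym z p]; ring)
  have hpp : 0 < B p p := by
    rcases lt_or_eq_of_le (by rw [← hcol]; positivity : (0:ℝ) ≤ B p p) with h | h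
    · exact h
    · exact absurd h.symm hp
  have hmid : ∑ x, ∑ y, (B x y * B x p) * B y p = B p p := by
    calc ∑ x, ∑ y, (B x y * B x p) * B y p = ∑ x, B x p * ∑ y, B x y * B p y := by
          refine Finset.sum_congr rfl (fun x _ => ?_)
          rw [Finset.mul_sum]
          exact Finset.sum_congr rfl (fun y _ => by rw [hsym p y]; ring)
      _ = ∑ x, B x p * B x p := by
          refine Finset.sum_congr rfl (fun x _ => ?_)
          rw [show (∑ y, B x y * B p y) = P x p from rfl, hPeB]
      _ = B p p := by rw [← hcol]; exact Finset.sum_congr rfl (fun x _ => by ring)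
  have hkey2 : ∑ x, ∑ y, ((B x y * B p p) - (B x p * B y p))^2 = 0 := by
    have h := sub_sq_expand (fun x y => B x y * B p p) (fun x y => B x p * B y p)
    have e1 : ∑ x, ∑ y, (B x y * B p p)^2 = B p p ^ 2 := by
      calc ∑ x, ∑ y, (B x y * B p p)^2 = ∑ x, ∑ y, (B x y)^2 * (B p p)^2 := by
            exact Finset.sum_congr rfl (fun x _ => Finset.sum_congr rfl (fun y _ => by ring))
        _ = (∑ x, ∑ y, (B x y)^2) * (B p p)^2 := by
            simp only [← Finset.sum_mul]
        _ = B p p ^ 2 := by rw [htr2]; ring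
    have e2 : ∑ x, ∑ y, (B x y * B p p) * (B x p * B y p) = B p p ^ 2 := by
      calc ∑ x, ∑ y, (B x y * B p p) * (B x p * B y p)
          = ∑ x, ∑ y, ((B x y * B x p) * B y p) * B p p := by
            exact Finset.sum_congr rfl (fun x _ => Finset.sum_congr rfl (fun y _ => by ring))
        _ = (∑ x, ∑ y, (B x y * B x p) * B y p) * B p p := by
            simp only [← Finset.sum_mul]
        _ = B p p ^ 2 := by rw [hmid]; ring
    have e3 : ∑ x, ∑ y, (B x p * B y p)^2 = B p p ^ 2 := by
      calc ∑ x, ∑ y, (B x p * B y p)^2 = ∑ x, ∑ y, (B x p)^2 * (B y p)^2 := by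
            exact Finset.sum_congr rfl (fun x _ => Finset.sum_congr rfl (fun y _ => by ring))
        _ = (∑ x, (B x p)^2) * (∑ y, (B y p)^2) := (Finset.sum_mul_sum _ _ _ _).symm
        _ = B p p ^ 2 := by rw [hcol]; ring
    rw [h, e1, e2, e3]; ring
  have hrank : ∀ x y, B x y * B p p = B x p * B y p := by
    intro x y
    have h1 := (Finset.sum_eq_zero_iff_of_nonneg (fun x _ => by positivity)).mp hkey2 x (Finset.mem_univ x)
    have h2 := (Finset.sum_eq_zero_iff_of_nonneg (fun y _ => by positivity)).mp h1 y (Finset.mem_univ y)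
    have := sq_eq_zero_iff.mp h2
    linarith [this]
  refine ⟨fun x => B x p / Real.sqrt (B p p), ?_, ?_⟩
  · have : ∀ x : ι, (B x p / Real.sqrt (B p p))^2 = (B x p)^2 / B p p := by
      intro x; rw [div_pow, Real.sq_sqrt hpp.le]
    rw [Finset.sum_congr rfl (fun x _ => this x), ← Finset.sum_div, hcol, div_self hp]
  · intro x y
    have hs : Real.sqrt (B p p) * Real.sqrt (B p p) = B p p := Real.mul_self_sqrt hpp.le
    rw [div_mul_div_comm, hs, ← hrank x y, mul_div_assoc, div_self hp, mul_one]

/-- The pair-index matrix `B_{(ij),(kl)} = 3 λ_{ijkl}`. -/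
def Bmat {N : ℕ} (A : (Fin 4 → Fin N) → ℝ) (x y : Fin N × Fin N) : ℝ :=
  3 * A ![x.1, x.2, y.1, y.2]

section BmatFacts
variable {N : ℕ} {A : (Fin 4 → Fin N) → ℝ}

lemma Bmat_symm (hA : IsSym4 A) (x y : Fin N × Fin N) : Bmat A x y = Bmat A y x := by
  unfold Bmat; rw [sAflip hA]

lemma sqnorm_pairs : ∑ x : Fin N × Fin N, ∑ y : Fin N × Fin N,
    (A ![x.1, x.2, y.1, y.2])^2 = sqnorm A := by
  unfold sqnorm
  simp only [Fintype.sum_prod_type]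

lemma Bmat_tr2 (hsq : sqnorm A = 1/9) :
    ∑ x, ∑ y, (Bmat A x y)^2 = 1 := by
  calc ∑ x, ∑ y, (Bmat A x y)^2
      = ∑ x : Fin N × Fin N, ∑ y : Fin N × Fin N, 9 * (A ![x.1, x.2, y.1, y.2])^2 := by
        exact Finset.sum_congr rfl (fun x _ => Finset.sum_congr rfl (fun y _ => by
          unfold Bmat; ring))
    _ = 9 * ∑ x : Fin N × Fin N, ∑ y : Fin N × Fin N, (A ![x.1, x.2, y.1, y.2])^2 := by
        simp only [← Finset.mul_sum]
    _ = 1 := by rw [sqnorm_pairs, hsq]; norm_num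

lemma Bmat_fp (hfp : IsFixedPoint A) (x y : Fin N × Fin N) :
    3 * Bmat A x y = ∑ z : Fin N × Fin N,
      (Bmat A x z * Bmat A y z + Bmat A (x.1, y.1) z * Bmat A (x.2, y.2) z
        + Bmat A (x.1, y.2) z * Bmat A (x.2, y.1) z) := by
  have h := hfp x.1 x.2 y.1 y.2
  simp only [Bmat, Fintype.sum_prod_type]
  rw [h]
  simp only [Finset.mul_sum]
  exact Finset.sum_congr rfl (fun m _ => Finset.sum_congr rfl (fun n _ => by ring))

lemma Bmat_tr3 (hA : IsSym4 A) (hfp : IsFixedPoint A) (h2 : ∑ x, ∑ y, (Bmat A x y)^2 = 1) :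
    ∑ x, ∑ y, ∑ z, Bmat A x y * Bmat A x z * Bmat A y z = 1 := by
  have e1 : ∑ x, ∑ y, (3 * Bmat A x y) * Bmat A x y = 3 := by
    calc ∑ x, ∑ y, (3 * Bmat A x y) * Bmat A x y = ∑ x, ∑ y, 3 * (Bmat A x y)^2 := by
          exact Finset.sum_congr rfl (fun x _ => Finset.sum_congr rfl (fun y _ => by ring))
      _ = 3 * ∑ x, ∑ y, (Bmat A x y)^2 := by simp only [← Finset.mul_sum]
      _ = 3 := by rw [h2]; norm_num
  have e2 : ∑ x, ∑ y,
      ((∑ z, (Bmat A x z * Bmat A y z + Bmat A (x.1, y.1) z * Bmat A (x.2, y.2) z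
        + Bmat A (x.1, y.2) z * Bmat A (x.2, y.1) z)) * Bmat A x y) = 3 := by
    rw [← e1]
    exact Finset.sum_congr rfl (fun x _ => Finset.sum_congr rfl (fun y _ => by
      rw [← Bmat_fp hfp x y]))
  have e3 : ∑ x, ∑ y,
      ((∑ z, (Bmat A x z * Bmat A y z + Bmat A (x.1, y.1) z * Bmat A (x.2, y.2) z
        + Bmat A (x.1, y.2) z * Bmat A (x.2, y.1) z)) * Bmat A x y)
      = (∑ x, ∑ y, ∑ z, (Bmat A x z * Bmat A y z) * Bmat A x y)
        + (∑ x, ∑ y, ∑ z, (Bmat A (x.1, y.1) z * Bmat A (x.2, y.2) z) * Bmat A x y)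
        + (∑ x, ∑ y, ∑ z, (Bmat A (x.1, y.2) z * Bmat A (x.2, y.1) z) * Bmat A x y) := by
    simp only [Finset.sum_mul, add_mul, Finset.sum_add_distrib]
  have hU2 : (∑ x : Fin N × Fin N, ∑ y : Fin N × Fin N,
        ∑ z, (Bmat A (x.1, y.1) z * Bmat A (x.2, y.2) z) * Bmat A x y)
      = ∑ x : Fin N × Fin N, ∑ y : Fin N × Fin N,
        ∑ z, (Bmat A x z * Bmat A y z) * Bmat A x y := by
    simp only [Fintype.sum_prod_type]
    refine Finset.sum_congr rfl (fun i _ => ?_)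
    rw [Finset.sum_comm]
    refine Finset.sum_congr rfl (fun j _ => Finset.sum_congr rfl (fun k _ =>
      Finset.sum_congr rfl (fun l _ => Finset.sum_congr rfl (fun z _ => ?_))))
    have : Bmat A (i, k) (j, l) = Bmat A (i, j) (k, l) := by
      unfold Bmat; rw [← sA12 hA]
    rw [this]
  have hU3 : (∑ x : Fin N × Fin N, ∑ y : Fin N × Fin N,
        ∑ z, (Bmat A (x.1, y.2) z * Bmat A (x.2, y.1) z) * Bmat A x y)
      = ∑ x : Fin N × Fin N, ∑ y : Fin N × Fin N,
        ∑ z, (Bmat A x z * Bmat A y z) * Bmat A x y := by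
    simp only [Fintype.sum_prod_type]
    refine Finset.sum_congr rfl (fun i _ => ?_)
    rw [sum3_cycle, sum3_cycle]
    refine Finset.sum_congr rfl (fun j _ => Finset.sum_congr rfl (fun k _ =>
      Finset.sum_congr rfl (fun l _ => Finset.sum_congr rfl (fun z _ => ?_))))
    have : Bmat A (i, k) (l, j) = Bmat A (i, j) (k, l) := by
      unfold Bmat
      rw [show A ![i,k,l,j] = A ![i,k,j,l] from sA23 hA i k l j, ← sA12 hA]
    rw [this]
  have hU1 : (∑ x, ∑ y, ∑ z, (Bmat A x z * Bmat A y z) * Bmat A x y) = 1 := by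
    have := e3.symm.trans e2
    rw [hU2, hU3] at this
    linarith
  calc ∑ x, ∑ y, ∑ z, Bmat A x y * Bmat A x z * Bmat A y z
      = ∑ x, ∑ y, ∑ z, (Bmat A x z * Bmat A y z) * Bmat A x y := by
        exact Finset.sum_congr rfl (fun x _ => Finset.sum_congr rfl (fun y _ =>
          Finset.sum_congr rfl (fun z _ => by ring)))
    _ = 1 := hU1

end BmatFacts

/-- a one-loop fixed point with `‖λ‖ = 1/3` is the Wilson–Fisher
coupling `λ_{ijkl} = (1/3) u_i u_j u_k u_l` for some unit vector `u`. -/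
theorem fixedPoint_norm_saturation {N : ℕ} (hN : 1 ≤ N)
    (A : (Fin 4 → Fin N) → ℝ) (hA : IsSym4 A) (hfp : IsFixedPoint A)
    (hnorm : Real.sqrt (sqnorm A) = 1 / 3) :
    ∃ u : Fin N → ℝ, (∑ i, u i ^ 2 = 1) ∧
      ∀ i j k l : Fin N, A ![i, j, k, l] = 1 / 3 * (u i * u j * u k * u l) := by
  have hsq0 : 0 ≤ sqnorm A := by
    unfold sqnorm; positivity
  have hsq : sqnorm A = 1/9 := by
    have := Real.sq_sqrt hsq0
    rw [hnorm] at this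
    nlinarith [this]
  have h2 := Bmat_tr2 (A := A) hsq
  have h3 := Bmat_tr3 hA hfp h2
  obtain ⟨v, hvn, hBv⟩ := rank_one_of (Bmat A) (Bmat_symm hA) h2 h3
  have hw : ∀ i j k l : Fin N, 3 * A ![i,j,k,l] = v (i,j) * v (k,l) := by
    intro i j k l
    exact hBv (i, j) (k, l)
  have hrel : ∀ i j k l : Fin N, v (i,j) * v (k,l) = v (i,k) * v (j,l) := by
    intro i j k l
    rw [← hw, ← hw, ← sA12 hA]
  have hwsq : ∑ i, ∑ j, (v (i,j))^2 = 1 := by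
    have hpr : (∑ x : Fin N × Fin N, v x ^ 2) = ∑ i, ∑ j, (v (i,j))^2 :=
      Fintype.sum_prod_type _
    exact hpr.symm.trans hvn
  have hq : ∃ q : Fin N, v (q,q) ≠ 0 := by
    by_contra hcon; push_neg at hcon
    have h0 : ∀ (i j : Fin N), (v (i,j))^2 = 0 := by
      intro i j
      have h := hrel i j i j
      rw [hcon i, zero_mul] at h
      rw [sq]; exact h
    rw [Finset.sum_congr rfl (fun i _ => Finset.sum_congr rfl (fun j _ => h0 i j))] at hwsq
    simp at hwsq
  obtain ⟨q, hq⟩ := hq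
  have habsne : |v (q,q)| ≠ 0 := abs_ne_zero.mpr hq
  have habs : Real.sqrt |v (q,q)| * Real.sqrt |v (q,q)| = |v (q,q)| :=
    Real.mul_self_sqrt (abs_nonneg _)
  set ε : ℝ := v (q,q) / |v (q,q)| with hεdef
  have hε : ε * ε = 1 := by
    rw [hεdef, div_mul_div_comm, abs_mul_abs_self, div_self (mul_ne_zero hq hq)]
  set u : Fin N → ℝ := fun i => v (i, q) / Real.sqrt |v (q,q)| with hu
  have huu : ∀ i j : Fin N, u i * u j = v (i,j) * ε := by
    intro i j
    have h1 : v (i,q) * v (j,q) = v (i,j) * v (q,q) := hrel i q j q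
    calc u i * u j = (v (i,q) * v (j,q)) / (Real.sqrt |v (q,q)| * Real.sqrt |v (q,q)|) := by
          simp only [hu]; exact div_mul_div_comm _ _ _ _
      _ = (v (i,j) * v (q,q)) / |v (q,q)| := by rw [habs, h1]
      _ = v (i,j) * ε := by rw [mul_div_assoc, hεdef]
  refine ⟨u, ?_, ?_⟩
  · have hsq1 : (∑ i, u i ^ 2)^2 = 1 := by
      rw [sq, Finset.sum_mul_sum]
      calc ∑ i, ∑ j, u i ^2 * u j ^2 = ∑ i, ∑ j, (v (i,j))^2 := by
            refine Finset.sum_congr rfl (fun i _ => Finset.sum_congr rfl (fun j _ => ?_))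
            calc u i ^2 * u j ^2 = (u i * u j)^2 := by ring
              _ = (v (i,j) * ε)^2 := by rw [huu]
              _ = (v (i,j))^2 * (ε * ε) := by ring
              _ = (v (i,j))^2 := by rw [hε, mul_one]
        _ = 1 := hwsq
    have hnn : 0 ≤ ∑ i, u i ^ 2 := by positivity
    nlinarith [hsq1, hnn]
  · intro i j k l
    have h4 : u i * u j * u k * u l = v (i,j) * v (k,l) := by
      calc u i * u j * u k * u l = (u i * u j) * (u k * u l) := by ring
        _ = (v (i,j) * ε) * (v (k,l) * ε) := by rw [huu, huu]
        _ = (v (i,j) * v (k,l)) * (ε * ε) := by ring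
        _ = v (i,j) * v (k,l) := by rw [hε, mul_one]
    rw [h4, ← hw]
    ring
end

section
/- If λ is a one-loop fixed point on ℝ^N, then a₀(λ)(N − a₀(λ))/(2N) = ‖λ‖² + ((N+4)/12) a₂(λ), where a₂(λ) = (6/(N+4)) (∑_{i,j} t_{ij}(λ)² − a₀(λ)²/N). -/
/-- `a₂(λ) = (6/(N+4)) (∑_{i,j} t_{ij}(λ)² − a₀(λ)²/N)`. -/
noncomputable def a2 {N : ℕ} (A : (Fin 4 → Fin N) → ℝ) : ℝ :=
  6 / ((N : ℝ) + 4) *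
    ((∑ i : Fin N, ∑ j : Fin N, (tmat A i j) ^ 2) - a0 A ^ 2 / (N : ℝ))

lemma perm_entry {N : ℕ} (A : (Fin 4 → Fin N) → ℝ) (hA : IsSym4 A)
    (σ : Equiv.Perm (Fin 4)) (i j k l : Fin N) :
    A ![![i,j,k,l] (σ 0), ![i,j,k,l] (σ 1), ![i,j,k,l] (σ 2), ![i,j,k,l] (σ 3)]
      = A ![i,j,k,l] := by
  have h := hA σ ![i,j,k,l]
  rw [← h]
  congr 1
  funext x
  fin_cases x <;> rfl

lemma sum_swap4 {α : Type*} [Fintype α] (f : α → α → α → α → ℝ) :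
    (∑ i : α, ∑ j : α, ∑ m : α, ∑ n : α, f i j m n)
      = ∑ m : α, ∑ n : α, ∑ i : α, ∑ j : α, f i j m n := by
  have h1 : (∑ i : α, ∑ j : α, ∑ m : α, ∑ n : α, f i j m n)
      = ∑ i : α, ∑ m : α, ∑ j : α, ∑ n : α, f i j m n :=
    Finset.sum_congr rfl fun i _ => Finset.sum_comm
  have h2 : (∑ i : α, ∑ m : α, ∑ j : α, ∑ n : α, f i j m n)
      = ∑ m : α, ∑ i : α, ∑ j : α, ∑ n : α, f i j m n :=
    Finset.sum_comm
  have h3 : (∑ m : α, ∑ i : α, ∑ j : α, ∑ n : α, f i j m n)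
      = ∑ m : α, ∑ i : α, ∑ n : α, ∑ j : α, f i j m n :=
    Finset.sum_congr rfl fun m _ => Finset.sum_congr rfl fun i _ => Finset.sum_comm
  have h4 : (∑ m : α, ∑ i : α, ∑ n : α, ∑ j : α, f i j m n)
      = ∑ m : α, ∑ n : α, ∑ i : α, ∑ j : α, f i j m n :=
    Finset.sum_congr rfl fun m _ => Finset.sum_comm
  rw [h1, h2, h3, h4]

/-- at a one-loop fixed point,
`a₀(λ)(N − a₀(λ))/(2N) = ‖λ‖² + ((N+4)/12) a₂(λ)`. -/
theorem fixedPoint_a0_relation {N : ℕ} (hN : 1 ≤ N)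
    (A : (Fin 4 → Fin N) → ℝ) (hA : IsSym4 A) (hfp : IsFixedPoint A) :
    a0 A * ((N : ℝ) - a0 A) / (2 * (N : ℝ)) =
      sqnorm A + ((N : ℝ) + 4) / 12 * a2 A := by
  have sym12 : ∀ i j k l : Fin N, A ![i,j,k,l] = A ![i,k,j,l] := by
    intro i j k l
    have h := perm_entry A hA (Equiv.swap 1 2) i j k l
    have h0 : (Equiv.swap (1:Fin 4) 2) 0 = 0 := by decide
    have h1 : (Equiv.swap (1:Fin 4) 2) 1 = 2 := by decide
    have h2 : (Equiv.swap (1:Fin 4) 2) 2 = 1 := by decide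
    have h3 : (Equiv.swap (1:Fin 4) 2) 3 = 3 := by decide
    rw [h0, h1, h2, h3] at h
    simpa using h.symm
  have sym01 : ∀ i j k l : Fin N, A ![i,j,k,l] = A ![j,i,k,l] := by
    intro i j k l
    have h := perm_entry A hA (Equiv.swap 0 1) i j k l
    have h0 : (Equiv.swap (0:Fin 4) 1) 0 = 1 := by decide
    have h1 : (Equiv.swap (0:Fin 4) 1) 1 = 0 := by decide
    have h2 : (Equiv.swap (0:Fin 4) 1) 2 = 2 := by decide
    have h3 : (Equiv.swap (0:Fin 4) 1) 3 = 3 := by decide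
    rw [h0, h1, h2, h3] at h
    simpa using h.symm
  have symflip : ∀ i j k l : Fin N, A ![i,j,k,l] = A ![k,l,i,j] := by
    intro i j k l
    have h := perm_entry A hA ((Equiv.swap 0 2) * (Equiv.swap 1 3) : Equiv.Perm (Fin 4)) i j k l
    have h0 : ((Equiv.swap (0:Fin 4) 2) * (Equiv.swap 1 3) : Equiv.Perm (Fin 4)) 0 = 2 := by decide
    have h1 : ((Equiv.swap (0:Fin 4) 2) * (Equiv.swap 1 3) : Equiv.Perm (Fin 4)) 1 = 3 := by decide
    have h2 : ((Equiv.swap (0:Fin 4) 2) * (Equiv.swap 1 3) : Equiv.Perm (Fin 4)) 2 = 0 := by decide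
    have h3 : ((Equiv.swap (0:Fin 4) 2) * (Equiv.swap 1 3) : Equiv.Perm (Fin 4)) 3 = 1 := by decide
    rw [h0, h1, h2, h3] at h
    simpa using h.symm
  have ht : ∀ m n : Fin N, (∑ i : Fin N, A ![i,i,m,n]) = tmat A m n := by
    intro m n
    unfold tmat
    exact Finset.sum_congr rfl fun k _ => symflip k k m n
  have key : a0 A = 2 * sqnorm A + ∑ i : Fin N, ∑ j : Fin N, (tmat A i j) ^ 2 := by
    have step1 : a0 A = ∑ i : Fin N, ∑ j : Fin N, A ![i,j,i,j] := by
      unfold a0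
      exact Finset.sum_congr rfl fun i _ => Finset.sum_congr rfl fun j _ => sym12 i i j j
    have step2 : ∀ i j : Fin N, A ![i,j,i,j] =
        ∑ m : Fin N, ∑ n : Fin N,
          (2 * (A ![i,j,m,n])^2 + A ![i,i,m,n] * A ![j,j,m,n]) := by
      intro i j
      rw [hfp i j i j]
      refine Finset.sum_congr rfl fun m _ => Finset.sum_congr rfl fun n _ => ?_
      have e3 : A ![j,i,m,n] = A ![i,j,m,n] := (sym01 i j m n).symm
      rw [e3]
      ring
    rw [step1]
    simp only [step2]
    have split : (∑ i : Fin N, ∑ j : Fin N, ∑ m : Fin N, ∑ n : Fin N,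
        (2 * (A ![i,j,m,n])^2 + A ![i,i,m,n] * A ![j,j,m,n]))
      = (∑ i : Fin N, ∑ j : Fin N, ∑ m : Fin N, ∑ n : Fin N, 2 * (A ![i,j,m,n])^2)
        + (∑ i : Fin N, ∑ j : Fin N, ∑ m : Fin N, ∑ n : Fin N,
            A ![i,i,m,n] * A ![j,j,m,n]) := by
      simp [Finset.sum_add_distrib]
    rw [split]
    have part1 : (∑ i : Fin N, ∑ j : Fin N, ∑ m : Fin N, ∑ n : Fin N,
        2 * (A ![i,j,m,n])^2) = 2 * sqnorm A := by
      unfold sqnorm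
      simp [Finset.mul_sum]
    have part2 : (∑ i : Fin N, ∑ j : Fin N, ∑ m : Fin N, ∑ n : Fin N,
        A ![i,i,m,n] * A ![j,j,m,n])
        = ∑ i : Fin N, ∑ j : Fin N, (tmat A i j) ^ 2 := by
      rw [sum_swap4 (fun i j m n => A ![i,i,m,n] * A ![j,j,m,n])]
      refine Finset.sum_congr rfl fun m _ => Finset.sum_congr rfl fun n _ => ?_
      rw [← Finset.sum_mul_sum, ht m n]
      ring
    rw [part1, part2]
  have hN0 : (N : ℝ) ≠ 0 := by positivity
  have hN4 : (N : ℝ) + 4 ≠ 0 := by positivity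
  unfold a2
  field_simp
  linear_combination (12*(N:ℝ)) * key
end

section
/- If λ is a one-loop fixed point on ℝ^N that is not identically zero, then ρ_N⁻ ≤ a₀(λ) ≤ ρ_N⁺, where ρ_N⁺ = N(N+2)/(N+8) and ρ_N⁻ = (N/2)(1 − √(1 − 8/(9N))). -/
namespace FPaux

variable {N : ℕ} {A : (Fin 4 → Fin N) → ℝ}

/-! ### Symmetry lemmas -/

lemma s12 (hA : IsSym4 A) (i j k l : Fin N) : A ![i,k,j,l] = A ![i,j,k,l] := by
  have h := hA (Equiv.swap 1 2) ![i,j,k,l]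
  rw [show (![i,j,k,l] ∘ (Equiv.swap 1 2 : Equiv.Perm (Fin 4))) = ![i,k,j,l] by
    funext x; fin_cases x <;> simp [Equiv.swap_apply_def]] at h
  exact h

lemma s13 (hA : IsSym4 A) (i j k l : Fin N) : A ![i,l,k,j] = A ![i,j,k,l] := by
  have h := hA (Equiv.swap 1 3) ![i,j,k,l]
  rw [show (![i,j,k,l] ∘ (Equiv.swap 1 3 : Equiv.Perm (Fin 4))) = ![i,l,k,j] by
    funext x; fin_cases x <;> simp [Equiv.swap_apply_def]] at h
  exact h

lemma s01 (hA : IsSym4 A) (i j k l : Fin N) : A ![j,i,k,l] = A ![i,j,k,l] := by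
  have h := hA (Equiv.swap 0 1) ![i,j,k,l]
  rw [show (![i,j,k,l] ∘ (Equiv.swap 0 1 : Equiv.Perm (Fin 4))) = ![j,i,k,l] by
    funext x; fin_cases x <;> simp [Equiv.swap_apply_def]] at h
  exact h

lemma spair (hA : IsSym4 A) (i j k l : Fin N) : A ![k,l,i,j] = A ![i,j,k,l] := by
  have h := hA ((Equiv.swap 0 2).trans (Equiv.swap 1 3)) ![i,j,k,l]
  rw [show (![i,j,k,l] ∘ ((Equiv.swap 0 2).trans (Equiv.swap 1 3) : Equiv.Perm (Fin 4)))
      = ![k,l,i,j] by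
    funext x; fin_cases x <;> simp [Equiv.swap_apply_def]] at h
  exact h

/-! ### Sum rearrangement helpers -/

lemma sum_cycle (f : Fin N → Fin N → Fin N → ℝ) :
    (∑ a, ∑ b, ∑ c, f a b c) = ∑ b, ∑ c, ∑ a, f a b c := by
  calc (∑ a, ∑ b, ∑ c, f a b c) = ∑ b, ∑ a, ∑ c, f a b c := Finset.sum_comm
    _ = ∑ b, ∑ c, ∑ a, f a b c := Finset.sum_congr rfl fun b _ => Finset.sum_comm

lemma sum_rev3 (f : Fin N → Fin N → Fin N → ℝ) :
    (∑ a, ∑ b, ∑ c, f a b c) = ∑ c, ∑ b, ∑ a, f a b c := by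
  calc (∑ a, ∑ b, ∑ c, f a b c) = ∑ b, ∑ c, ∑ a, f a b c := sum_cycle f
    _ = ∑ c, ∑ b, ∑ a, f a b c := Finset.sum_comm

lemma quad_factor (F G : Fin N → Fin N → Fin N → ℝ) :
    ∑ i, ∑ k, ∑ m, ∑ n, F i m n * G k m n = ∑ m, ∑ n, (∑ i, F i m n) * (∑ k, G k m n) := by
  calc ∑ i, ∑ k, ∑ m, ∑ n, F i m n * G k m n
      = ∑ i, ∑ m, ∑ n, ∑ k, F i m n * G k m n :=
        Finset.sum_congr rfl fun i _ => sum_cycle (fun k m n => F i m n * G k m n)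
    _ = ∑ m, ∑ n, ∑ i, ∑ k, F i m n * G k m n :=
        sum_cycle (fun i m n => ∑ k, F i m n * G k m n)
    _ = ∑ m, ∑ n, (∑ i, F i m n) * (∑ k, G k m n) := by
        refine Finset.sum_congr rfl fun m _ => Finset.sum_congr rfl fun n _ => ?_
        rw [Finset.sum_mul_sum]

lemma sum4_prod (f : Fin N → Fin N → Fin N → Fin N → ℝ) :
    ∑ p : Fin N × Fin N × Fin N × Fin N, f p.1 p.2.1 p.2.2.1 p.2.2.2
      = ∑ i, ∑ j, ∑ k, ∑ l, f i j k l := by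
  simp [Fintype.sum_prod_type]

lemma sum2_prod (f : Fin N → Fin N → ℝ) :
    ∑ p : Fin N × Fin N, f p.1 p.2 = ∑ i, ∑ j, f i j := by
  simp [Fintype.sum_prod_type]

lemma sum4_factor (F G : Fin N → Fin N → ℝ) :
    ∑ i, ∑ j, ∑ k, ∑ l, F i j * G k l = (∑ i, ∑ j, F i j) * (∑ k, ∑ l, G k l) := by
  simp only [← Finset.mul_sum, ← Finset.sum_mul]

/-! ### The trace identity `a₀ = ‖t‖² + 2‖λ‖²` -/

lemma trace_id (hA : IsSym4 A) (hfp : IsFixedPoint A) :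
    a0 A = (∑ i, ∑ j, (tmat A i j)^2) + 2 * sqnorm A := by
  have h1 : a0 A =
      ((∑ i : Fin N, ∑ k : Fin N, ∑ m : Fin N, ∑ n : Fin N, A ![i,i,m,n] * A ![k,k,m,n])
        + ∑ i : Fin N, ∑ k : Fin N, ∑ m : Fin N, ∑ n : Fin N, A ![i,k,m,n] * A ![i,k,m,n])
        + ∑ i : Fin N, ∑ k : Fin N, ∑ m : Fin N, ∑ n : Fin N, A ![i,k,m,n] * A ![i,k,m,n] := by
    unfold a0
    rw [show (∑ i : Fin N, ∑ k : Fin N, A ![i,i,k,k])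
        = ∑ i : Fin N, ∑ k : Fin N, ∑ m : Fin N, ∑ n : Fin N,
            (A ![i,i,m,n] * A ![k,k,m,n] + A ![i,k,m,n] * A ![i,k,m,n]
              + A ![i,k,m,n] * A ![i,k,m,n]) from
      Finset.sum_congr rfl fun i _ => Finset.sum_congr rfl fun k _ => hfp i i k k]
    simp only [Finset.sum_add_distrib]
  have hS1 : (∑ i : Fin N, ∑ k : Fin N, ∑ m : Fin N, ∑ n : Fin N, A ![i,i,m,n] * A ![k,k,m,n])
      = ∑ i, ∑ j, (tmat A i j)^2 := by
    rw [quad_factor (fun i m n => A ![i,i,m,n]) (fun k m n => A ![k,k,m,n])]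
    refine Finset.sum_congr rfl fun m _ => Finset.sum_congr rfl fun n _ => ?_
    have ht : (∑ i, A ![i,i,m,n]) = tmat A m n := by
      unfold tmat
      exact Finset.sum_congr rfl fun i _ => spair hA m n i i
    rw [ht, pow_two]
  have hS2 : (∑ i : Fin N, ∑ k : Fin N, ∑ m : Fin N, ∑ n : Fin N, A ![i,k,m,n] * A ![i,k,m,n])
      = sqnorm A := by
    unfold sqnorm; simp only [pow_two]
  rw [h1, hS1, hS2]; ring

/-! ### Cauchy–Schwarz for the trace of `t` -/

lemma cs_trace : (a0 A)^2 ≤ (N : ℝ) * ∑ i, ∑ j, (tmat A i j)^2 := by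
  have h0 : a0 A = ∑ i, tmat A i i := rfl
  have h1 : (∑ i, tmat A i i)^2 ≤ (N:ℝ) * ∑ i, (tmat A i i)^2 := by
    have := sq_sum_le_card_mul_sum_sq (s := (Finset.univ : Finset (Fin N)))
      (f := fun i => tmat A i i)
    simpa using this
  have h2 : (∑ i, (tmat A i i)^2) ≤ ∑ i, ∑ j, (tmat A i j)^2 :=
    Finset.sum_le_sum fun i _ =>
      Finset.single_le_sum (fun j _ => sq_nonneg (tmat A i j)) (Finset.mem_univ i)
  rw [h0]
  calc (∑ i, tmat A i i)^2 ≤ (N:ℝ) * ∑ i, (tmat A i i)^2 := h1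
    _ ≤ (N:ℝ) * ∑ i, ∑ j, (tmat A i j)^2 := by
        exact mul_le_mul_of_nonneg_left h2 (by positivity)

/-! ### Cauchy–Schwarz against the symmetric delta tensor -/

noncomputable def Gd (i j k l : Fin N) : ℝ :=
  (if i = j then (1:ℝ) else 0) * (if k = l then 1 else 0)
    + (if i = k then (1:ℝ) else 0) * (if j = l then 1 else 0)
    + (if i = l then (1:ℝ) else 0) * (if j = k then 1 else 0)

lemma sumGG : (∑ i : Fin N, ∑ j, ∑ k, ∑ l, (Gd i j k l)^2) = 3*(N:ℝ)^2 + 6*N := by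
  have expand : ∀ i j k l : Fin N, (Gd i j k l)^2 =
      Gd i j k l * ((if i = j then (1:ℝ) else 0) * (if k = l then 1 else 0))
      + Gd i j k l * ((if i = k then (1:ℝ) else 0) * (if j = l then 1 else 0))
      + Gd i j k l * ((if i = l then (1:ℝ) else 0) * (if j = k then 1 else 0)) := by
    intro i j k l
    conv_lhs => rw [pow_two]
    conv_lhs => rw [show Gd i j k l * Gd i j k l = Gd i j k l *
      ((if i = j then (1:ℝ) else 0) * (if k = l then 1 else 0)
        + (if i = k then (1:ℝ) else 0) * (if j = l then 1 else 0)
        + (if i = l then (1:ℝ) else 0) * (if j = k then 1 else 0)) from rfl]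
    ring
  simp only [expand, Finset.sum_add_distrib]
  simp [Gd, mul_ite, ite_mul, Finset.sum_ite_eq, Finset.sum_ite_eq', Finset.sum_add_distrib,
    Finset.card_univ, mul_add, add_mul]
  ring

lemma sumFG (hA : IsSym4 A) :
    (∑ i : Fin N, ∑ j, ∑ k, ∑ l, A ![i,j,k,l] * Gd i j k l) = 3 * a0 A := by
  have expand : ∀ i j k l : Fin N, A ![i,j,k,l] * Gd i j k l =
      A ![i,j,k,l] * ((if i = j then (1:ℝ) else 0) * (if k = l then 1 else 0))
      + A ![i,j,k,l] * ((if i = k then (1:ℝ) else 0) * (if j = l then 1 else 0))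
      + A ![i,j,k,l] * ((if i = l then (1:ℝ) else 0) * (if j = k then 1 else 0)) := by
    intro i j k l
    unfold Gd
    ring
  simp only [expand, Finset.sum_add_distrib]
  have e1 : (∑ i : Fin N, ∑ j, ∑ k, ∑ l, A ![i,j,k,l]
      * ((if i = j then (1:ℝ) else 0) * (if k = l then 1 else 0)))
      = ∑ i : Fin N, ∑ k, A ![i,i,k,k] := by
    simp [mul_ite, ite_mul, Finset.sum_ite_eq, Finset.sum_ite_eq']
  have e2 : (∑ i : Fin N, ∑ j, ∑ k, ∑ l, A ![i,j,k,l]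
      * ((if i = k then (1:ℝ) else 0) * (if j = l then 1 else 0)))
      = ∑ i : Fin N, ∑ j, A ![i,j,i,j] := by
    simp [mul_ite, ite_mul, Finset.sum_ite_eq, Finset.sum_ite_eq']
  have e3 : (∑ i : Fin N, ∑ j, ∑ k, ∑ l, A ![i,j,k,l]
      * ((if i = l then (1:ℝ) else 0) * (if j = k then 1 else 0)))
      = ∑ i : Fin N, ∑ j, A ![i,j,j,i] := by
    simp [mul_ite, ite_mul, Finset.sum_ite_eq, Finset.sum_ite_eq']
  rw [e1, e2, e3]
  have f2 : (∑ i : Fin N, ∑ j, A ![i,j,i,j]) = a0 A :=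
    Finset.sum_congr rfl fun i _ => Finset.sum_congr rfl fun j _ => s12 hA i i j j
  have f3 : (∑ i : Fin N, ∑ j, A ![i,j,j,i]) = a0 A :=
    Finset.sum_congr rfl fun i _ => Finset.sum_congr rfl fun j _ => s13 hA i i j j
  rw [f2, f3]
  unfold a0
  ring

lemma cs_S (hA : IsSym4 A) : 3*(a0 A)^2 ≤ (N:ℝ)*((N:ℝ)+2) * sqnorm A := by
  have cs := Finset.sum_mul_sq_le_sq_mul_sq Finset.univ
    (fun p : Fin N × Fin N × Fin N × Fin N => A ![p.1, p.2.1, p.2.2.1, p.2.2.2])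
    (fun p : Fin N × Fin N × Fin N × Fin N => Gd p.1 p.2.1 p.2.2.1 p.2.2.2)
  rw [sum4_prod (fun i j k l => A ![i,j,k,l] * Gd i j k l),
    sum4_prod (fun i j k l => (A ![i,j,k,l])^2),
    sum4_prod (fun i j k l => (Gd i j k l)^2)] at cs
  rw [sumFG hA, sumGG] at cs
  have hs : (∑ i : Fin N, ∑ j, ∑ k, ∑ l, (A ![i,j,k,l])^2) = sqnorm A := rfl
  rw [hs] at cs
  nlinarith [cs]




variable {N : ℕ} {A : (Fin 4 → Fin N) → ℝ}

/-! ### Contraction of the fixed point equation with `λ` -/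

lemma contract_id (hA : IsSym4 A) (hfp : IsFixedPoint A) :
    sqnorm A = 3 * ∑ i : Fin N, ∑ j, ∑ k, ∑ l, ∑ m, ∑ n,
      A ![i,j,k,l] * (A ![i,j,m,n] * A ![k,l,m,n]) := by
  have h1 : sqnorm A =
      ((∑ i : Fin N, ∑ j, ∑ k, ∑ l, ∑ m, ∑ n, A ![i,j,k,l] * (A ![i,j,m,n] * A ![k,l,m,n]))
        + ∑ i : Fin N, ∑ j, ∑ k, ∑ l, ∑ m, ∑ n, A ![i,j,k,l] * (A ![i,k,m,n] * A ![j,l,m,n]))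
        + ∑ i : Fin N, ∑ j, ∑ k, ∑ l, ∑ m, ∑ n, A ![i,j,k,l] * (A ![i,l,m,n] * A ![j,k,m,n]) := by
    unfold sqnorm
    rw [show (∑ i : Fin N, ∑ j, ∑ k, ∑ l, (A ![i,j,k,l])^2)
        = ∑ i : Fin N, ∑ j, ∑ k, ∑ l, ∑ m, ∑ n,
            (A ![i,j,k,l] * (A ![i,j,m,n] * A ![k,l,m,n])
              + A ![i,j,k,l] * (A ![i,k,m,n] * A ![j,l,m,n])
              + A ![i,j,k,l] * (A ![i,l,m,n] * A ![j,k,m,n])) from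
      Finset.sum_congr rfl fun i _ => Finset.sum_congr rfl fun j _ =>
        Finset.sum_congr rfl fun k _ => Finset.sum_congr rfl fun l _ => by
          calc (A ![i,j,k,l])^2
              = A ![i,j,k,l] * (∑ m : Fin N, ∑ n : Fin N,
                  (A ![i,j,m,n] * A ![k,l,m,n] + A ![i,k,m,n] * A ![j,l,m,n]
                    + A ![i,l,m,n] * A ![j,k,m,n])) := by
                rw [pow_two]; exact congrArg _ (hfp i j k l)
            _ = _ := by simp only [Finset.mul_sum, mul_add]]
    simp only [Finset.sum_add_distrib]
  have hT2 : (∑ i : Fin N, ∑ j, ∑ k, ∑ l, ∑ m, ∑ n,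
        A ![i,j,k,l] * (A ![i,k,m,n] * A ![j,l,m,n]))
      = ∑ i : Fin N, ∑ j, ∑ k, ∑ l, ∑ m, ∑ n,
        A ![i,j,k,l] * (A ![i,j,m,n] * A ![k,l,m,n]) := by
    calc (∑ i : Fin N, ∑ j, ∑ k, ∑ l, ∑ m, ∑ n, A ![i,j,k,l] * (A ![i,k,m,n] * A ![j,l,m,n]))
        = ∑ i : Fin N, ∑ j, ∑ k, ∑ l, ∑ m, ∑ n,
            A ![i,k,j,l] * (A ![i,j,m,n] * A ![k,l,m,n]) :=
          Finset.sum_congr rfl fun i _ => Finset.sum_comm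
      _ = _ := by
          refine Finset.sum_congr rfl fun i _ => Finset.sum_congr rfl fun j _ =>
            Finset.sum_congr rfl fun k _ => Finset.sum_congr rfl fun l _ =>
            Finset.sum_congr rfl fun m _ => Finset.sum_congr rfl fun n _ => ?_
          rw [s12 hA i j k l]
  have hT3 : (∑ i : Fin N, ∑ j, ∑ k, ∑ l, ∑ m, ∑ n,
        A ![i,j,k,l] * (A ![i,l,m,n] * A ![j,k,m,n]))
      = ∑ i : Fin N, ∑ j, ∑ k, ∑ l, ∑ m, ∑ n,
        A ![i,j,k,l] * (A ![i,j,m,n] * A ![k,l,m,n]) := by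
    calc (∑ i : Fin N, ∑ j, ∑ k, ∑ l, ∑ m, ∑ n, A ![i,j,k,l] * (A ![i,l,m,n] * A ![j,k,m,n]))
        = ∑ i : Fin N, ∑ j, ∑ k, ∑ l, ∑ m, ∑ n,
            A ![i,l,k,j] * (A ![i,j,m,n] * A ![l,k,m,n]) :=
          Finset.sum_congr rfl fun i _ =>
            sum_rev3 (fun j k l => ∑ m : Fin N, ∑ n : Fin N,
              A ![i,j,k,l] * (A ![i,l,m,n] * A ![j,k,m,n]))
      _ = _ := by
          refine Finset.sum_congr rfl fun i _ => Finset.sum_congr rfl fun j _ =>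
            Finset.sum_congr rfl fun k _ => Finset.sum_congr rfl fun l _ =>
            Finset.sum_congr rfl fun m _ => Finset.sum_congr rfl fun n _ => ?_
          rw [s13 hA i j k l, s01 hA k l m n]
  rw [h1, hT2, hT3]; ring

/-! ### `‖λ‖² ≥ 1/9` for a nonzero fixed point -/

lemma sqnorm_pos (hne : A ≠ 0) : 0 < sqnorm A := by
  obtain ⟨g, hg⟩ : ∃ g, A g ≠ 0 := by
    by_contra h; push_neg at h; exact hne (funext fun g => h g)
  have hg' : A ![g 0, g 1, g 2, g 3] ≠ 0 := by
    rwa [show ![g 0, g 1, g 2, g 3] = g by funext x; fin_cases x <;> rfl]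
  have p0 : 0 < (A ![g 0, g 1, g 2, g 3])^2 := by positivity
  have p1 : (A ![g 0, g 1, g 2, g 3])^2 ≤ ∑ l, (A ![g 0, g 1, g 2, l])^2 :=
    Finset.single_le_sum (f := fun l => (A ![g 0, g 1, g 2, l])^2)
      (fun _ _ => sq_nonneg _) (Finset.mem_univ _)
  have p2 : (∑ l, (A ![g 0, g 1, g 2, l])^2) ≤ ∑ k, ∑ l, (A ![g 0, g 1, k, l])^2 :=
    Finset.single_le_sum (f := fun k => ∑ l, (A ![g 0, g 1, k, l])^2)
      (fun k _ => Finset.sum_nonneg fun l _ => sq_nonneg _) (Finset.mem_univ _)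
  have p3 : (∑ k, ∑ l, (A ![g 0, g 1, k, l])^2) ≤ ∑ j, ∑ k, ∑ l, (A ![g 0, j, k, l])^2 :=
    Finset.single_le_sum (f := fun j => ∑ k, ∑ l, (A ![g 0, j, k, l])^2)
      (fun j _ => Finset.sum_nonneg fun k _ => Finset.sum_nonneg fun l _ => sq_nonneg _)
      (Finset.mem_univ _)
  have p4 : (∑ j, ∑ k, ∑ l, (A ![g 0, j, k, l])^2)
      ≤ ∑ i, ∑ j, ∑ k, ∑ l, (A ![i, j, k, l])^2 :=
    Finset.single_le_sum (f := fun i => ∑ j, ∑ k, ∑ l, (A ![i, j, k, l])^2)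
      (fun i _ => Finset.sum_nonneg fun j _ => Finset.sum_nonneg fun k _ =>
        Finset.sum_nonneg fun l _ => sq_nonneg _)
      (Finset.mem_univ _)
  exact lt_of_lt_of_le p0 (p1.trans (p2.trans (p3.trans p4)))

lemma nine_bound (hA : IsSym4 A) (hfp : IsFixedPoint A) (hne : A ≠ 0) :
    1/9 ≤ sqnorm A := by
  set s := sqnorm A with hs_def
  set T := ∑ i : Fin N, ∑ j, ∑ k, ∑ l, ∑ m, ∑ n,
    A ![i,j,k,l] * (A ![i,j,m,n] * A ![k,l,m,n]) with hT_def
  have hc : s = 3 * T := contract_id hA hfp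
  have hs : 0 < s := sqnorm_pos hne
  -- T as a contraction with the matrix square
  have hT1C : T = ∑ i : Fin N, ∑ j, ∑ k, ∑ l,
      A ![i,j,k,l] * (∑ m : Fin N, ∑ n : Fin N, A ![i,j,m,n] * A ![k,l,m,n]) := by
    rw [hT_def]
    refine Finset.sum_congr rfl fun i _ => Finset.sum_congr rfl fun j _ =>
      Finset.sum_congr rfl fun k _ => Finset.sum_congr rfl fun l _ => ?_
    simp only [Finset.mul_sum]
  set Q := ∑ i : Fin N, ∑ j, ∑ k, ∑ l,
    (∑ m : Fin N, ∑ n : Fin N, A ![i,j,m,n] * A ![k,l,m,n])^2 with hQ_def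
  have hcs : T^2 ≤ s * Q := by
    have cs := Finset.sum_mul_sq_le_sq_mul_sq Finset.univ
      (fun p : Fin N × Fin N × Fin N × Fin N => A ![p.1, p.2.1, p.2.2.1, p.2.2.2])
      (fun p : Fin N × Fin N × Fin N × Fin N =>
        ∑ m : Fin N, ∑ n : Fin N, A ![p.1, p.2.1, m, n] * A ![p.2.2.1, p.2.2.2, m, n])
    rw [sum4_prod (fun i j k l => A ![i,j,k,l]
        * (∑ m : Fin N, ∑ n : Fin N, A ![i,j,m,n] * A ![k,l,m,n])),
      sum4_prod (fun i j k l => (A ![i,j,k,l])^2),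
      sum4_prod (fun i j k l =>
        (∑ m : Fin N, ∑ n : Fin N, A ![i,j,m,n] * A ![k,l,m,n])^2)] at cs
    rw [hT1C]
    exact cs
  have hQle : Q ≤ s * s := by
    have point : ∀ i j k l : Fin N,
        (∑ m : Fin N, ∑ n : Fin N, A ![i,j,m,n] * A ![k,l,m,n])^2
          ≤ (∑ m : Fin N, ∑ n : Fin N, (A ![i,j,m,n])^2)
            * (∑ m : Fin N, ∑ n : Fin N, (A ![k,l,m,n])^2) := by
      intro i j k l
      have cs2 := Finset.sum_mul_sq_le_sq_mul_sq Finset.univ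
        (fun p : Fin N × Fin N => A ![i, j, p.1, p.2])
        (fun p : Fin N × Fin N => A ![k, l, p.1, p.2])
      rw [sum2_prod (fun m n => A ![i,j,m,n] * A ![k,l,m,n]),
        sum2_prod (fun m n => (A ![i,j,m,n])^2),
        sum2_prod (fun m n => (A ![k,l,m,n])^2)] at cs2
      exact cs2
    calc Q ≤ ∑ i : Fin N, ∑ j, ∑ k, ∑ l,
          (∑ m : Fin N, ∑ n : Fin N, (A ![i,j,m,n])^2)
            * (∑ m : Fin N, ∑ n : Fin N, (A ![k,l,m,n])^2) := by
          rw [hQ_def]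
          exact Finset.sum_le_sum fun i _ => Finset.sum_le_sum fun j _ =>
            Finset.sum_le_sum fun k _ => Finset.sum_le_sum fun l _ => point i j k l
      _ = (∑ i : Fin N, ∑ j, ∑ m : Fin N, ∑ n : Fin N, (A ![i,j,m,n])^2)
            * (∑ k : Fin N, ∑ l, ∑ m : Fin N, ∑ n : Fin N, (A ![k,l,m,n])^2) :=
          sum4_factor (fun i j => ∑ m : Fin N, ∑ n : Fin N, (A ![i,j,m,n])^2)
            (fun k l => ∑ m : Fin N, ∑ n : Fin N, (A ![k,l,m,n])^2)
      _ = s * s := rfl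
  have hsq : s * Q ≤ s * (s * s) := mul_le_mul_of_nonneg_left hQle hs.le
  have hT : T = s / 3 := by linarith
  rw [hT] at hcs
  nlinarith [hcs, hsq, hs, mul_pos hs hs]



end FPaux

/-- for a nonzero one-loop fixed point, `ρ_N⁻ ≤ a₀(λ) ≤ ρ_N⁺`, where
`ρ_N⁺ = N(N+2)/(N+8)` and `ρ_N⁻ = (N/2)(1 − √(1 − 8/(9N)))`. -/
theorem fixedPoint_a0_bounds {N : ℕ} (hN : 1 ≤ N)
    (A : (Fin 4 → Fin N) → ℝ) (hA : IsSym4 A) (hfp : IsFixedPoint A)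
    (hne : A ≠ 0) :
    (N : ℝ) / 2 * (1 - Real.sqrt (1 - 8 / (9 * (N : ℝ)))) ≤ a0 A ∧
      a0 A ≤ (N : ℝ) * ((N : ℝ) + 2) / ((N : ℝ) + 8) := by
  have hNR : (1:ℝ) ≤ (N:ℝ) := by exact_mod_cast hN
  have hNpos : (0:ℝ) < N := by linarith
  set s := sqnorm A with hs_def
  set P := ∑ i : Fin N, ∑ j : Fin N, (tmat A i j)^2 with hP_def
  have h1 : a0 A = P + 2*s := FPaux.trace_id hA hfp
  have h2 : (a0 A)^2 ≤ (N:ℝ) * P := FPaux.cs_trace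
  have h3 : 3*(a0 A)^2 ≤ (N:ℝ)*((N:ℝ)+2)*s := FPaux.cs_S hA
  have h4 : 1/9 ≤ s := FPaux.nine_bound hA hfp hne
  have h5 : 0 < s := FPaux.sqnorm_pos hne
  have hP0 : 0 ≤ P := Finset.sum_nonneg fun i _ => Finset.sum_nonneg fun j _ => sq_nonneg _
  have ha0 : 0 < a0 A := by rw [h1]; linarith
  constructor
  · -- lower bound
    have e2 : (N:ℝ)*(a0 A) = (N:ℝ)*P + 2*(N:ℝ)*s := by rw [h1]; ring
    have hm : 2*(N:ℝ)*(1/9) ≤ 2*(N:ℝ)*s :=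
      mul_le_mul_of_nonneg_left h4 (by linarith)
    have key2 : (a0 A)^2 + 2*(N:ℝ)/9 ≤ (N:ℝ) * a0 A := by linarith
    have hD : (0:ℝ) ≤ 1 - 8/(9*(N:ℝ)) := by
      have h9 : 8/(9*(N:ℝ)) ≤ 8/9 := by
        rw [div_le_div_iff₀ (by positivity) (by norm_num)]
        nlinarith
      linarith
    by_cases hcase : (N:ℝ) - 2*(a0 A) ≤ 0
    · have hsq := Real.sqrt_nonneg (1 - 8/(9*(N:ℝ)))
      nlinarith [mul_nonneg (by linarith : (0:ℝ) ≤ (N:ℝ)/2) hsq]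
    · push_neg at hcase
      have hle : ((N:ℝ) - 2*(a0 A))/(N:ℝ) ≤ Real.sqrt (1 - 8/(9*(N:ℝ))) := by
        apply (Real.le_sqrt (div_nonneg (by linarith) hNpos.le) hD).mpr
        rw [div_pow, div_le_iff₀ (by positivity : (0:ℝ) < (N:ℝ)^2)]
        have expandD : (1 - 8/(9*(N:ℝ)))*(N:ℝ)^2 = (N:ℝ)^2 - 8*(N:ℝ)/9 := by
          field_simp
        rw [expandD]
        nlinarith [key2]
      have hmul : (N:ℝ) * (((N:ℝ) - 2*(a0 A))/(N:ℝ)) = (N:ℝ) - 2*(a0 A) := by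
        field_simp
      nlinarith [mul_le_mul_of_nonneg_left hle (le_of_lt hNpos), hmul]
  · -- upper bound
    have e : (N:ℝ)*((N:ℝ)+2)*(a0 A) = (N:ℝ)*((N:ℝ)+2)*P + 2*((N:ℝ)*((N:ℝ)+2))*s := by
      rw [h1]; ring
    have hintA : ((N:ℝ)+2)*(a0 A)^2 ≤ ((N:ℝ)+2)*((N:ℝ)*P) :=
      mul_le_mul_of_nonneg_left h2 (by linarith)
    have key : ((N:ℝ)+8)*(a0 A)^2 ≤ (N:ℝ)*((N:ℝ)+2)*(a0 A) := by nlinarith [e, hintA, h3]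
    rw [le_div_iff₀ (by linarith : (0:ℝ) < (N:ℝ)+8)]
    nlinarith [key, ha0]
end

section
/- If λ is a one-loop fixed point on ℝ^N, then ‖λ‖² ≤ a₀(λ)(N − a₀(λ))/(2N); in particular ‖λ‖² ≤ N/8. -/
/-- Swapping the first and second pairs of indices. -/
lemma sym_swap_pairs {N : ℕ} (A : (Fin 4 → Fin N) → ℝ) (hA : IsSym4 A)
    (i j m n : Fin N) : A ![i, j, m, n] = A ![m, n, i, j] := by
  have h := hA (Equiv.swap 0 2 * Equiv.swap 1 3) ![m, n, i, j]
  rw [← h]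
  congr 1
  funext x
  fin_cases x <;> rfl

/-- Reordering a fourfold sum. -/
lemma sum_swap24 {N : ℕ} (f : Fin N → Fin N → Fin N → Fin N → ℝ) :
    (∑ i, ∑ j, ∑ m, ∑ n, f i j m n) = ∑ m, ∑ n, ∑ i, ∑ j, f i j m n :=
  calc ∑ i, ∑ j, ∑ m, ∑ n, f i j m n
      = ∑ i, ∑ m, ∑ j, ∑ n, f i j m n := Finset.sum_congr rfl fun _ _ => Finset.sum_comm
    _ = ∑ i, ∑ m, ∑ n, ∑ j, f i j m n :=
        Finset.sum_congr rfl fun _ _ => Finset.sum_congr rfl fun _ _ => Finset.sum_comm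
    _ = ∑ m, ∑ i, ∑ n, ∑ j, f i j m n := Finset.sum_comm
    _ = ∑ m, ∑ n, ∑ i, ∑ j, f i j m n := Finset.sum_congr rfl fun _ _ => Finset.sum_comm

/-- Key trace identity: `a₀ = ‖t‖² + 2‖λ‖²`. -/
lemma a0_eq {N : ℕ} (A : (Fin 4 → Fin N) → ℝ) (hA : IsSym4 A) (hfp : IsFixedPoint A) :
    a0 A = (∑ m : Fin N, ∑ n : Fin N, (tmat A m n) ^ 2) + 2 * sqnorm A := by
  have h1 : a0 A = ∑ i : Fin N, ∑ j : Fin N, ∑ m : Fin N, ∑ n : Fin N,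
      (A ![i, i, m, n] * A ![j, j, m, n] + A ![i, j, m, n] * A ![i, j, m, n]
        + A ![i, j, m, n] * A ![i, j, m, n]) :=
    Finset.sum_congr rfl fun i _ => Finset.sum_congr rfl fun j _ => hfp i i j j
  have h2 : ∀ i j m n : Fin N,
      A ![i, i, m, n] * A ![j, j, m, n] + A ![i, j, m, n] * A ![i, j, m, n]
        + A ![i, j, m, n] * A ![i, j, m, n]
      = A ![m, n, i, i] * A ![m, n, j, j] + 2 * (A ![i, j, m, n]) ^ 2 := by
    intro i j m n
    rw [sym_swap_pairs A hA i i m n, sym_swap_pairs A hA j j m n]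
    ring
  have h3 : a0 A = (∑ i : Fin N, ∑ j : Fin N, ∑ m : Fin N, ∑ n : Fin N,
      A ![m, n, i, i] * A ![m, n, j, j]) + 2 * sqnorm A := by
    rw [h1]
    simp only [h2]
    simp only [Finset.sum_add_distrib, ← Finset.mul_sum]
    rfl
  have h4 : (∑ i : Fin N, ∑ j : Fin N, ∑ m : Fin N, ∑ n : Fin N,
      A ![m, n, i, i] * A ![m, n, j, j])
      = ∑ m : Fin N, ∑ n : Fin N, (tmat A m n) ^ 2 := by
    rw [sum_swap24]
    refine Finset.sum_congr rfl fun m _ => Finset.sum_congr rfl fun n _ => ?_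
    rw [show (∑ i : Fin N, ∑ j : Fin N, A ![m, n, i, i] * A ![m, n, j, j])
        = (∑ i : Fin N, A ![m, n, i, i]) * (∑ j : Fin N, A ![m, n, j, j]) by
      rw [Finset.sum_mul_sum]]
    rw [tmat, sq]
  rw [h3, h4]

/-- at a one-loop fixed point, `‖λ‖² ≤ a₀(λ)(N − a₀(λ))/(2N)`;
in particular `‖λ‖² ≤ N/8`. -/
theorem fixedPoint_sqnorm_upper {N : ℕ} (hN : 1 ≤ N)
    (A : (Fin 4 → Fin N) → ℝ) (hA : IsSym4 A) (hfp : IsFixedPoint A) :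
    sqnorm A ≤ a0 A * ((N : ℝ) - a0 A) / (2 * (N : ℝ)) ∧
      sqnorm A ≤ (N : ℝ) / 8 := by
  have hNpos : (0 : ℝ) < N := by exact_mod_cast hN
  set T : ℝ := ∑ m : Fin N, ∑ n : Fin N, (tmat A m n) ^ 2 with hT
  have key : a0 A = T + 2 * sqnorm A := a0_eq A hA hfp
  -- trace of t is a0
  have htr : a0 A = ∑ i : Fin N, tmat A i i := by
    unfold a0 tmat
    rfl
  -- Cauchy–Schwarz
  have hcs1 : (a0 A) ^ 2 ≤ (N : ℝ) * ∑ i : Fin N, (tmat A i i) ^ 2 := by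
    rw [htr]
    have := sq_sum_le_card_mul_sum_sq (s := (Finset.univ : Finset (Fin N)))
      (f := fun i => tmat A i i)
    simpa using this
  have hdiag : (∑ i : Fin N, (tmat A i i) ^ 2) ≤ T := by
    refine Finset.sum_le_sum fun i _ => ?_
    exact Finset.single_le_sum (fun j _ => sq_nonneg (tmat A i j)) (Finset.mem_univ i)
  have hcs : (a0 A) ^ 2 ≤ (N : ℝ) * T :=
    hcs1.trans (by nlinarith)
  constructor
  · rw [le_div_iff₀ (by positivity)]
    nlinarith [hcs, key, hNpos]
  · rw [le_div_iff₀ (by norm_num : (0:ℝ) < 8)]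
    nlinarith [hcs, key, hNpos, sq_nonneg (2 * a0 A - (N : ℝ))]
end

section
/- If N = 2 or N = 3 and λ is a one-loop fixed point on ℝ^N, then ‖λ‖² ≤ 3N(N+2)/(N+8)², i.e. ‖λ‖² ≤ 6/25 for N = 2 and ‖λ‖² ≤ 45/121 for N = 3; this is the value of ‖λ‖² at the O(N) fixed point. -/
namespace S9

/-! ### Symmetry helpers -/

lemma sym_apply {N : ℕ} {A : (Fin 4 → Fin N) → ℝ} (hA : IsSym4 A)
    (σ : Equiv.Perm (Fin 4)) (f g : Fin 4 → Fin N) (h : ∀ x, f (σ x) = g x) :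
    A g = A f := by
  rw [← hA σ f]; congr 1; funext x; exact (h x).symm

def pswap : Equiv.Perm (Fin 4) := ⟨![2,3,0,1], ![2,3,0,1], by decide, by decide⟩
def m12 : Equiv.Perm (Fin 4) := ⟨![0,2,1,3], ![0,2,1,3], by decide, by decide⟩
def m23 : Equiv.Perm (Fin 4) := ⟨![0,1,3,2], ![0,1,3,2], by decide, by decide⟩

lemma sym_pair {N : ℕ} {A : (Fin 4 → Fin N) → ℝ} (hA : IsSym4 A) (i j k l : Fin N) :
    A ![i,j,k,l] = A ![k,l,i,j] :=
  sym_apply hA pswap ![k,l,i,j] ![i,j,k,l] (by intro x; fin_cases x <;> rfl)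

lemma sym_12 {N : ℕ} {A : (Fin 4 → Fin N) → ℝ} (hA : IsSym4 A) (i j k l : Fin N) :
    A ![i,j,k,l] = A ![i,k,j,l] :=
  sym_apply hA m12 ![i,k,j,l] ![i,j,k,l] (by intro x; fin_cases x <;> rfl)

lemma sym_23 {N : ℕ} {A : (Fin 4 → Fin N) → ℝ} (hA : IsSym4 A) (i j k l : Fin N) :
    A ![i,j,k,l] = A ![i,j,l,k] :=
  sym_apply hA m23 ![i,j,l,k] ![i,j,k,l] (by intro x; fin_cases x <;> rfl)

/-! ### Sum reordering -/

lemma sum4_comm {ι : Type*} [Fintype ι] (f : ι → ι → ι → ι → ℝ) :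
    (∑ i : ι, ∑ k : ι, ∑ m : ι, ∑ n : ι, f i k m n)
      = ∑ m : ι, ∑ n : ι, ∑ i : ι, ∑ k : ι, f i k m n := by
  have h1 : (∑ i : ι, ∑ k : ι, ∑ m : ι, ∑ n : ι, f i k m n)
      = ∑ i : ι, ∑ m : ι, ∑ k : ι, ∑ n : ι, f i k m n :=
    Finset.sum_congr rfl fun i _ => Finset.sum_comm ..
  have h2 : (∑ i : ι, ∑ m : ι, ∑ k : ι, ∑ n : ι, f i k m n)
      = ∑ m : ι, ∑ i : ι, ∑ k : ι, ∑ n : ι, f i k m n := Finset.sum_comm ..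
  have h3 : (∑ m : ι, ∑ i : ι, ∑ k : ι, ∑ n : ι, f i k m n)
      = ∑ m : ι, ∑ i : ι, ∑ n : ι, ∑ k : ι, f i k m n :=
    Finset.sum_congr rfl fun m _ => Finset.sum_congr rfl fun i _ => Finset.sum_comm ..
  have h4 : (∑ m : ι, ∑ i : ι, ∑ n : ι, ∑ k : ι, f i k m n)
      = ∑ m : ι, ∑ n : ι, ∑ i : ι, ∑ k : ι, f i k m n :=
    Finset.sum_congr rfl fun m _ => Finset.sum_comm ..
  rw [h1, h2, h3, h4]

/-! ### Identity (I): `a0 = ‖t‖² + 2‖λ‖²` -/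

lemma identI {N : ℕ} {A : (Fin 4 → Fin N) → ℝ} (hA : IsSym4 A) (hfp : IsFixedPoint A) :
    a0 A = (∑ i : Fin N, ∑ j : Fin N, (tmat A i j) ^ 2) + 2 * sqnorm A := by
  have key : ∀ m n : Fin N, (∑ i : Fin N, A ![i,i,m,n]) = tmat A m n := by
    intro m n
    exact Finset.sum_congr rfl fun i _ => sym_pair hA i i m n
  calc a0 A
      = ∑ i : Fin N, ∑ k : Fin N, ∑ m : Fin N, ∑ n : Fin N,
          (A ![i,i,m,n] * A ![k,k,m,n] + A ![i,k,m,n] * A ![i,k,m,n]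
            + A ![i,k,m,n] * A ![i,k,m,n]) :=
        Finset.sum_congr rfl fun i _ => Finset.sum_congr rfl fun k _ => hfp i i k k
    _ = (∑ i : Fin N, ∑ k : Fin N, ∑ m : Fin N, ∑ n : Fin N,
          A ![i,i,m,n] * A ![k,k,m,n])
        + 2 * ∑ i : Fin N, ∑ k : Fin N, ∑ m : Fin N, ∑ n : Fin N,
          A ![i,k,m,n] * A ![i,k,m,n] := by
        simp only [Finset.sum_add_distrib, two_mul, add_assoc]
    _ = (∑ i : Fin N, ∑ j : Fin N, (tmat A i j) ^ 2) + 2 * sqnorm A := by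
        congr 1
        · rw [sum4_comm]
          refine Finset.sum_congr rfl fun m _ => Finset.sum_congr rfl fun n _ => ?_
          rw [← Finset.sum_mul_sum, key, sq]
        · congr 1
          simp only [sqnorm, pow_two]

/-! ### Delta tensor -/

noncomputable def d {N : ℕ} (i j : Fin N) : ℝ := if i = j then 1 else 0

lemma D1 {N : ℕ} (H : Fin N → Fin N → Fin N → Fin N → ℝ) :
    (∑ i : Fin N, ∑ j : Fin N, ∑ k : Fin N, ∑ l : Fin N, H i j k l * (d i j * d k l))
      = ∑ i : Fin N, ∑ k : Fin N, H i i k k := by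
  simp [d, mul_ite, ite_mul, Finset.sum_ite_eq, Finset.sum_ite_eq', Finset.sum_ite_irrel,
    Finset.sum_const_zero, ite_self]

lemma D2 {N : ℕ} (H : Fin N → Fin N → Fin N → Fin N → ℝ) :
    (∑ i : Fin N, ∑ j : Fin N, ∑ k : Fin N, ∑ l : Fin N, H i j k l * (d i k * d j l))
      = ∑ i : Fin N, ∑ j : Fin N, H i j i j := by
  simp [d, mul_ite, ite_mul, Finset.sum_ite_eq, Finset.sum_ite_eq', Finset.sum_ite_irrel,
    Finset.sum_const_zero, ite_self]

lemma D3 {N : ℕ} (H : Fin N → Fin N → Fin N → Fin N → ℝ) :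
    (∑ i : Fin N, ∑ j : Fin N, ∑ k : Fin N, ∑ l : Fin N, H i j k l * (d i l * d j k))
      = ∑ i : Fin N, ∑ j : Fin N, H i j j i := by
  simp [d, mul_ite, ite_mul, Finset.sum_ite_eq, Finset.sum_ite_eq', Finset.sum_ite_irrel,
    Finset.sum_const_zero, ite_self]

lemma dsq {N : ℕ} (i j : Fin N) : d i j * d i j = d i j := by
  by_cases h : i = j <;> simp [d, h]

lemma dsymm {N : ℕ} (i j : Fin N) : d j i = d i j := by
  simp [d, eq_comm]

lemma sum_d {N : ℕ} : (∑ i : Fin N, ∑ j : Fin N, d i j) = (N:ℝ) := by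
  simp [d, Finset.sum_ite_eq]

lemma d_self {N : ℕ} (i : Fin N) : d i i = 1 := by simp [d]

/-- The `O(N)`-invariant tensor `G`. -/
noncomputable def Gt {N : ℕ} (i j k l : Fin N) : ℝ :=
  d i j * d k l + d i k * d j l + d i l * d j k

lemma sumFG {N : ℕ} {A : (Fin 4 → Fin N) → ℝ} (hA : IsSym4 A) :
    (∑ i : Fin N, ∑ j : Fin N, ∑ k : Fin N, ∑ l : Fin N, A ![i,j,k,l] * Gt i j k l)
      = 3 * a0 A := by
  have expand : (∑ i : Fin N, ∑ j : Fin N, ∑ k : Fin N, ∑ l : Fin N,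
      A ![i,j,k,l] * Gt i j k l)
      = (∑ i : Fin N, ∑ j : Fin N, ∑ k : Fin N, ∑ l : Fin N,
          A ![i,j,k,l] * (d i j * d k l))
        + (∑ i : Fin N, ∑ j : Fin N, ∑ k : Fin N, ∑ l : Fin N,
          A ![i,j,k,l] * (d i k * d j l))
        + ∑ i : Fin N, ∑ j : Fin N, ∑ k : Fin N, ∑ l : Fin N,
          A ![i,j,k,l] * (d i l * d j k) := by
    simp only [Gt, mul_add, Finset.sum_add_distrib]
  rw [expand, D1 (fun i j k l => A ![i,j,k,l]), D2 (fun i j k l => A ![i,j,k,l]),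
    D3 (fun i j k l => A ![i,j,k,l])]
  have e2 : (∑ i : Fin N, ∑ j : Fin N, A ![i,j,i,j]) = a0 A :=
    Finset.sum_congr rfl fun i _ => Finset.sum_congr rfl fun j _ => sym_12 hA i j i j
  have e3 : (∑ i : Fin N, ∑ j : Fin N, A ![i,j,j,i]) = a0 A := by
    refine Finset.sum_congr rfl fun i _ => Finset.sum_congr rfl fun j _ => ?_
    rw [sym_23 hA i j j i, sym_12 hA i j i j]
  rw [e2, e3]
  show a0 A + a0 A + a0 A = 3 * a0 A
  ring

lemma sum_one_one {N : ℕ} (c : ℝ) :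
    (∑ i : Fin N, ∑ j : Fin N, (1 + c * d i j)) = (N:ℝ)^2 + c * N := by
  simp only [Finset.sum_add_distrib, ← Finset.mul_sum]
  rw [sum_d]
  simp [Finset.sum_const, Finset.card_univ, mul_comm]
  push_cast
  ring

lemma sumGG {N : ℕ} :
    (∑ i : Fin N, ∑ j : Fin N, ∑ k : Fin N, ∑ l : Fin N, (Gt i j k l) ^ 2)
      = 3 * (N:ℝ)^2 + 6 * N := by
  have pt : ∀ i j k l : Fin N, (Gt i j k l) ^ 2
      = Gt i j k l * (d i j * d k l) + Gt i j k l * (d i k * d j l)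
        + Gt i j k l * (d i l * d j k) := by
    intro i j k l
    have : Gt i j k l = d i j * d k l + d i k * d j l + d i l * d j k := rfl
    rw [pow_two]
    nth_rewrite 2 [this]
    ring
  have expand : (∑ i : Fin N, ∑ j : Fin N, ∑ k : Fin N, ∑ l : Fin N, (Gt i j k l) ^ 2)
      = (∑ i : Fin N, ∑ j : Fin N, ∑ k : Fin N, ∑ l : Fin N,
          Gt i j k l * (d i j * d k l))
        + (∑ i : Fin N, ∑ j : Fin N, ∑ k : Fin N, ∑ l : Fin N,
          Gt i j k l * (d i k * d j l))
        + ∑ i : Fin N, ∑ j : Fin N, ∑ k : Fin N, ∑ l : Fin N,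
          Gt i j k l * (d i l * d j k) := by
    simp only [pt, Finset.sum_add_distrib]
  rw [expand, D1 (fun i j k l => Gt i j k l), D2 (fun i j k l => Gt i j k l),
    D3 (fun i j k l => Gt i j k l)]
  have c1 : ∀ i k : Fin N, Gt i i k k = 1 + 2 * d i k := by
    intro i k
    show d i i * d k k + d i k * d i k + d i k * d i k = _
    rw [d_self, d_self, dsq]; ring
  have c2 : ∀ i j : Fin N, Gt i j i j = 1 + 2 * d i j := by
    intro i j
    show d i j * d i j + d i i * d j j + d i j * d j i = _
    rw [d_self, d_self, dsq, dsymm, dsq]; ring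
  have c3 : ∀ i j : Fin N, Gt i j j i = 1 + 2 * d i j := by
    intro i j
    show d i j * d j i + d i j * d j i + d i i * d j j = _
    rw [d_self, d_self, dsymm, dsq]; ring
  simp only [c1, c2, c3, sum_one_one]
  ring

/-! ### Cauchy-Schwarz inequalities -/

lemma CS2 {N : ℕ} {A : (Fin 4 → Fin N) → ℝ} (hA : IsSym4 A) :
    (3 * a0 A) ^ 2 ≤ sqnorm A * (3 * (N:ℝ)^2 + 6 * N) := by
  have cs := Finset.sum_mul_sq_le_sq_mul_sq (Finset.univ : Finset (Fin N × Fin N × Fin N × Fin N))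
    (fun p => A ![p.1, p.2.1, p.2.2.1, p.2.2.2]) (fun p => Gt p.1 p.2.1 p.2.2.1 p.2.2.2)
  simp only [Fintype.sum_prod_type] at cs
  rw [sumFG hA, sumGG] at cs
  calc (3 * a0 A) ^ 2 ≤ (∑ i : Fin N, ∑ j : Fin N, ∑ k : Fin N, ∑ l : Fin N,
      (A ![i,j,k,l]) ^ 2) * (3 * (N:ℝ)^2 + 6 * N) := cs
    _ = sqnorm A * (3 * (N:ℝ)^2 + 6 * N) := rfl

lemma CS1 {N : ℕ} {A : (Fin 4 → Fin N) → ℝ} :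
    (a0 A) ^ 2 ≤ (N:ℝ) * ∑ i : Fin N, ∑ j : Fin N, (tmat A i j) ^ 2 := by
  have h0 : a0 A = ∑ i : Fin N, tmat A i i := rfl
  have h1 : (∑ i : Fin N, tmat A i i) ^ 2
      ≤ ((Finset.univ : Finset (Fin N)).card : ℝ) * ∑ i : Fin N, (tmat A i i) ^ 2 := by
    have := sq_sum_le_card_mul_sum_sq (α := ℝ) (ι := Fin N)
      (s := Finset.univ) (f := fun i => tmat A i i)
    exact_mod_cast this
  have h2 : (∑ i : Fin N, (tmat A i i) ^ 2)
      ≤ ∑ i : Fin N, ∑ j : Fin N, (tmat A i j) ^ 2 := by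
    refine Finset.sum_le_sum fun i _ => ?_
    exact Finset.single_le_sum (f := fun j => (tmat A i j) ^ 2)
      (fun j _ => sq_nonneg _) (Finset.mem_univ i)
  rw [h0]
  calc (∑ i : Fin N, tmat A i i) ^ 2
      ≤ ((Finset.univ : Finset (Fin N)).card : ℝ) * ∑ i : Fin N, (tmat A i i) ^ 2 := h1
    _ = (N:ℝ) * ∑ i : Fin N, (tmat A i i) ^ 2 := by
        simp [Finset.card_univ]
    _ ≤ (N:ℝ) * ∑ i : Fin N, ∑ j : Fin N, (tmat A i j) ^ 2 := by
        exact mul_le_mul_of_nonneg_left h2 (Nat.cast_nonneg N)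

lemma sqnorm_nonneg {N : ℕ} (A : (Fin 4 → Fin N) → ℝ) : 0 ≤ sqnorm A := by
  refine Finset.sum_nonneg fun i _ => Finset.sum_nonneg fun j _ =>
    Finset.sum_nonneg fun k _ => Finset.sum_nonneg fun l _ => sq_nonneg _

lemma T2_nonneg {N : ℕ} (A : (Fin 4 → Fin N) → ℝ) :
    0 ≤ ∑ i : Fin N, ∑ j : Fin N, (tmat A i j) ^ 2 :=
  Finset.sum_nonneg fun i _ => Finset.sum_nonneg fun j _ => sq_nonneg _

end S9

/-- for `N = 2` or `N = 3`, any one-loop fixed point satisfies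
`‖λ‖² ≤ 3N(N+2)/(N+8)²`, the value at the `O(N)` fixed point
(`6/25` for `N = 2`, `45/121` for `N = 3`). -/
theorem fixedPoint_sqnorm_upper_smallN {N : ℕ} (hN : N = 2 ∨ N = 3)
    (A : (Fin 4 → Fin N) → ℝ) (hA : IsSym4 A) (hfp : IsFixedPoint A) :
    sqnorm A ≤ 3 * (N : ℝ) * ((N : ℝ) + 2) / ((N : ℝ) + 8) ^ 2 := by
  have hI := S9.identI hA hfp
  have h1 := S9.CS1 (A := A)
  have h2 := S9.CS2 hA
  have hQ := S9.sqnorm_nonneg A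
  have hT := S9.T2_nonneg A
  set a := a0 A with ha
  set Q := sqnorm A with hq
  set T2 := ∑ i : Fin N, ∑ j : Fin N, (tmat A i j) ^ 2 with hT2
  rcases hN with rfl | rfl
  · -- N = 2
    norm_num at h1 h2 ⊢
    -- hI : a = T2 + 2Q, h1 : a² ≤ 2 T2, h2 : 9 a² ≤ Q * 24
    have ha4 : a ≤ 4/5 := by nlinarith
    have ha0 : 0 ≤ a := by nlinarith
    nlinarith
  · -- N = 3
    norm_num at h1 h2 ⊢
    have ha4 : a ≤ 15/11 := by nlinarith
    have ha0 : 0 ≤ a := by nlinarith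
    nlinarith
end

section
/- If λ is a one-loop fixed point on ℝ^N, then (N+2)(N+16)‖λ‖² ≥ 3 a₀(λ) (2N + 4 − a₀(λ)). -/
private lemma ite_ite' {c : Prop} [Decidable c] (a b e : ℝ) :
    (if c then (if c then a else b) else e) = if c then a else e := by
  split <;> rfl

section Perms

variable {N : ℕ} {A : (Fin 4 → Fin N) → ℝ}

private lemma swap01 (hA : IsSym4 A) (i j k l : Fin N) :
    A ![j, i, k, l] = A ![i, j, k, l] := by
  have h := hA (Equiv.swap 0 1) ![i, j, k, l]
  rw [show (![i, j, k, l] ∘ ⇑(Equiv.swap (0:Fin 4) 1)) = ![j, i, k, l] by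
    funext x; fin_cases x <;> simp [Equiv.swap_apply_def]] at h
  exact h

private lemma swap12 (hA : IsSym4 A) (i j k l : Fin N) :
    A ![i, k, j, l] = A ![i, j, k, l] := by
  have h := hA (Equiv.swap 1 2) ![i, j, k, l]
  rw [show (![i, j, k, l] ∘ ⇑(Equiv.swap (1:Fin 4) 2)) = ![i, k, j, l] by
    funext x; fin_cases x <;> simp [Equiv.swap_apply_def]] at h
  exact h

private lemma permRev (hA : IsSym4 A) (i j k l : Fin N) :
    A ![k, l, i, j] = A ![i, j, k, l] := by
  have h := hA ((Equiv.swap (0:Fin 4) 2 * Equiv.swap (1:Fin 4) 3 : Equiv.Perm (Fin 4)))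
    ![i, j, k, l]
  rw [show (![i, j, k, l] ∘ ⇑(Equiv.swap (0:Fin 4) 2 * Equiv.swap (1:Fin 4) 3 :
      Equiv.Perm (Fin 4))) = ![k, l, i, j] by
    funext x; fin_cases x <;> simp [Equiv.Perm.mul_apply, Equiv.swap_apply_def]] at h
  exact h

private lemma perm1302 (hA : IsSym4 A) (i j k l : Fin N) :
    A ![j, l, i, k] = A ![i, j, k, l] := by
  have h := hA ((Equiv.swap (0:Fin 4) 1 * Equiv.swap (1:Fin 4) 3 * Equiv.swap (3:Fin 4) 2 :
    Equiv.Perm (Fin 4))) ![i, j, k, l]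
  rw [show (![i, j, k, l] ∘ ⇑(Equiv.swap (0:Fin 4) 1 * Equiv.swap (1:Fin 4) 3 *
      Equiv.swap (3:Fin 4) 2 : Equiv.Perm (Fin 4))) = ![j, l, i, k] by
    funext x; fin_cases x <;> simp [Equiv.Perm.mul_apply, Equiv.swap_apply_def]] at h
  exact h

private lemma perm0312 (hA : IsSym4 A) (i j k l : Fin N) :
    A ![i, l, j, k] = A ![i, j, k, l] := by
  have h := hA ((Equiv.swap (1:Fin 4) 3 * Equiv.swap (3:Fin 4) 2 : Equiv.Perm (Fin 4)))
    ![i, j, k, l]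
  rw [show (![i, j, k, l] ∘ ⇑(Equiv.swap (1:Fin 4) 3 * Equiv.swap (3:Fin 4) 2 :
      Equiv.Perm (Fin 4))) = ![i, l, j, k] by
    funext x; fin_cases x <;> simp [Equiv.Perm.mul_apply, Equiv.swap_apply_def]] at h
  exact h

private lemma perm1203 (hA : IsSym4 A) (i j k l : Fin N) :
    A ![j, k, i, l] = A ![i, j, k, l] := by
  have h := hA ((Equiv.swap (0:Fin 4) 1 * Equiv.swap (1:Fin 4) 2 : Equiv.Perm (Fin 4)))
    ![i, j, k, l]
  rw [show (![i, j, k, l] ∘ ⇑(Equiv.swap (0:Fin 4) 1 * Equiv.swap (1:Fin 4) 2 :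
      Equiv.Perm (Fin 4))) = ![j, k, i, l] by
    funext x; fin_cases x <;> simp [Equiv.Perm.mul_apply, Equiv.swap_apply_def]] at h
  exact h

private lemma tmat_symm (hA : IsSym4 A) (i j : Fin N) : tmat A i j = tmat A j i :=
  Finset.sum_congr rfl fun k _ => (swap01 hA i j k k).symm

end Perms

section SumComm

variable {N : ℕ}

private lemma sum3_rot (f : Fin N → Fin N → Fin N → ℝ) :
    ∑ i : Fin N, ∑ k : Fin N, ∑ l : Fin N, f i k l
      = ∑ k : Fin N, ∑ l : Fin N, ∑ i : Fin N, f i k l := by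
  rw [Finset.sum_comm]
  exact Finset.sum_congr rfl fun k _ => Finset.sum_comm

private lemma sum3_mid (f : Fin N → Fin N → Fin N → ℝ) :
    ∑ i : Fin N, ∑ k : Fin N, ∑ l : Fin N, f i k l
      = ∑ i : Fin N, ∑ l : Fin N, ∑ k : Fin N, f i k l :=
  Finset.sum_congr rfl fun i _ => Finset.sum_comm

private lemma sum4_swap (f : Fin N → Fin N → Fin N → Fin N → ℝ) :
    ∑ i : Fin N, ∑ j : Fin N, ∑ m : Fin N, ∑ n : Fin N, f i j m n
      = ∑ m : Fin N, ∑ n : Fin N, ∑ i : Fin N, ∑ j : Fin N, f i j m n := by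
  have h1 : ∀ i : Fin N, ∑ j : Fin N, ∑ m : Fin N, ∑ n : Fin N, f i j m n
      = ∑ m : Fin N, ∑ n : Fin N, ∑ j : Fin N, f i j m n := fun i => sum3_rot _
  rw [Finset.sum_congr rfl fun i _ => h1 i]
  exact sum3_rot _

end SumComm


section PP

variable {N : ℕ} (g : Fin N → Fin N → ℝ)

private lemma sumP11 :
    ∑ i : Fin N, ∑ j : Fin N, ∑ k : Fin N, ∑ l : Fin N,
      (g i j * (if k = l then (1:ℝ) else 0) + (if i = j then (1:ℝ) else 0) * g k l)
      * (g i j * (if k = l then (1:ℝ) else 0) + (if i = j then (1:ℝ) else 0) * g k l)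
    = 2*(N:ℝ) * (∑ i : Fin N, ∑ j : Fin N, g i j * g i j)
      + 2 * ((∑ i : Fin N, g i i) * (∑ i : Fin N, g i i)) := by
  have e : ∀ x1 x2 : ℝ, (x1+x2)*(x1+x2) = x1*x1 + x1*x2 + x2*x1 + x2*x2 := by intros; ring
  simp only [e, mul_ite, ite_mul, mul_one, one_mul, mul_zero, zero_mul,
    Finset.sum_add_distrib, Finset.sum_ite_irrel, Finset.sum_ite_eq, Finset.sum_ite_eq',
    ite_ite', Finset.mem_univ, if_true,
    Finset.sum_const, Finset.card_univ, Fintype.card_fin, nsmul_eq_mul]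
  simp only [← Finset.mul_sum, ← Finset.sum_mul]
  ring

private lemma sumP22 :
    ∑ i : Fin N, ∑ j : Fin N, ∑ k : Fin N, ∑ l : Fin N,
      (g i k * (if j = l then (1:ℝ) else 0) + (if i = k then (1:ℝ) else 0) * g j l)
      * (g i k * (if j = l then (1:ℝ) else 0) + (if i = k then (1:ℝ) else 0) * g j l)
    = 2*(N:ℝ) * (∑ i : Fin N, ∑ j : Fin N, g i j * g i j)
      + 2 * ((∑ i : Fin N, g i i) * (∑ i : Fin N, g i i)) := by
  have e : ∀ x1 x2 : ℝ, (x1+x2)*(x1+x2) = x1*x1 + x1*x2 + x2*x1 + x2*x2 := by intros; ring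
  simp only [e, mul_ite, ite_mul, mul_one, one_mul, mul_zero, zero_mul,
    Finset.sum_add_distrib, Finset.sum_ite_irrel, Finset.sum_ite_eq, Finset.sum_ite_eq',
    ite_ite', Finset.mem_univ, if_true,
    Finset.sum_const, Finset.card_univ, Fintype.card_fin, nsmul_eq_mul]
  try simp only [← Finset.mul_sum, ← Finset.sum_mul]
  ring

private lemma sumP33 :
    ∑ i : Fin N, ∑ j : Fin N, ∑ k : Fin N, ∑ l : Fin N,
      (g i l * (if j = k then (1:ℝ) else 0) + (if i = l then (1:ℝ) else 0) * g j k)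
      * (g i l * (if j = k then (1:ℝ) else 0) + (if i = l then (1:ℝ) else 0) * g j k)
    = 2*(N:ℝ) * (∑ i : Fin N, ∑ j : Fin N, g i j * g i j)
      + 2 * ((∑ i : Fin N, g i i) * (∑ i : Fin N, g i i)) := by
  have e : ∀ x1 x2 : ℝ, (x1+x2)*(x1+x2) = x1*x1 + x1*x2 + x2*x1 + x2*x2 := by intros; ring
  simp only [e, mul_ite, ite_mul, mul_one, one_mul, mul_zero, zero_mul,
    Finset.sum_add_distrib, Finset.sum_ite_irrel, Finset.sum_ite_eq, Finset.sum_ite_eq',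
    ite_ite', Finset.mem_univ, if_true,
    Finset.sum_const, Finset.card_univ, Fintype.card_fin, nsmul_eq_mul]
  try simp only [← Finset.mul_sum, ← Finset.sum_mul]
  ring

variable (hg : ∀ i j, g i j = g j i)
include hg

private lemma sumP12 :
    ∑ i : Fin N, ∑ j : Fin N, ∑ k : Fin N, ∑ l : Fin N,
      (g i j * (if k = l then (1:ℝ) else 0) + (if i = j then (1:ℝ) else 0) * g k l)
      * (g i k * (if j = l then (1:ℝ) else 0) + (if i = k then (1:ℝ) else 0) * g j l)
    = 4 * (∑ i : Fin N, ∑ j : Fin N, g i j * g i j) := by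
  have e : ∀ x1 x2 y1 y2 : ℝ, (x1+x2)*(y1+y2) = x1*y1 + x1*y2 + x2*y1 + x2*y2 := by
    intros; ring
  have hsw1 : ∀ i j : Fin N, g i j * g j i = g i j * g i j := fun i j => by rw [← hg i j]
  have hsw2 : ∀ i j : Fin N, g j i * g i j = g i j * g i j := fun i j => by rw [← hg i j]
  simp only [e, mul_ite, ite_mul, mul_one, one_mul, mul_zero, zero_mul,
    Finset.sum_add_distrib, Finset.sum_ite_irrel, Finset.sum_ite_eq, Finset.sum_ite_eq',
    ite_ite', Finset.mem_univ, if_true,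
    Finset.sum_const, Finset.card_univ, Fintype.card_fin, nsmul_eq_mul]
  try simp only [hsw1, hsw2]
  try rw [show (∑ x : Fin N, ∑ y : Fin N, g y x * g y x)
      = ∑ x : Fin N, ∑ y : Fin N, g x y * g x y from Finset.sum_comm]
  try simp only [← Finset.mul_sum, ← Finset.sum_mul]
  ring

private lemma sumP13 :
    ∑ i : Fin N, ∑ j : Fin N, ∑ k : Fin N, ∑ l : Fin N,
      (g i j * (if k = l then (1:ℝ) else 0) + (if i = j then (1:ℝ) else 0) * g k l)
      * (g i l * (if j = k then (1:ℝ) else 0) + (if i = l then (1:ℝ) else 0) * g j k)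
    = 4 * (∑ i : Fin N, ∑ j : Fin N, g i j * g i j) := by
  have e : ∀ x1 x2 y1 y2 : ℝ, (x1+x2)*(y1+y2) = x1*y1 + x1*y2 + x2*y1 + x2*y2 := by
    intros; ring
  have hsw1 : ∀ i j : Fin N, g i j * g j i = g i j * g i j := fun i j => by rw [← hg i j]
  have hsw2 : ∀ i j : Fin N, g j i * g i j = g i j * g i j := fun i j => by rw [← hg i j]
  simp only [e, mul_ite, ite_mul, mul_one, one_mul, mul_zero, zero_mul,
    Finset.sum_add_distrib, Finset.sum_ite_irrel, Finset.sum_ite_eq, Finset.sum_ite_eq',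
    ite_ite', Finset.mem_univ, if_true,
    Finset.sum_const, Finset.card_univ, Fintype.card_fin, nsmul_eq_mul]
  try simp only [hsw1, hsw2]
  try rw [show (∑ x : Fin N, ∑ y : Fin N, g y x * g y x)
      = ∑ x : Fin N, ∑ y : Fin N, g x y * g x y from Finset.sum_comm]
  try simp only [← Finset.mul_sum, ← Finset.sum_mul]
  ring

private lemma sumP23 :
    ∑ i : Fin N, ∑ j : Fin N, ∑ k : Fin N, ∑ l : Fin N,
      (g i k * (if j = l then (1:ℝ) else 0) + (if i = k then (1:ℝ) else 0) * g j l)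
      * (g i l * (if j = k then (1:ℝ) else 0) + (if i = l then (1:ℝ) else 0) * g j k)
    = 4 * (∑ i : Fin N, ∑ j : Fin N, g i j * g i j) := by
  have e : ∀ x1 x2 y1 y2 : ℝ, (x1+x2)*(y1+y2) = x1*y1 + x1*y2 + x2*y1 + x2*y2 := by
    intros; ring
  have hsw1 : ∀ i j : Fin N, g i j * g j i = g i j * g i j := fun i j => by rw [← hg i j]
  have hsw2 : ∀ i j : Fin N, g j i * g i j = g i j * g i j := fun i j => by rw [← hg i j]
  simp only [e, mul_ite, ite_mul, mul_one, one_mul, mul_zero, zero_mul,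
    Finset.sum_add_distrib, Finset.sum_ite_irrel, Finset.sum_ite_eq, Finset.sum_ite_eq',
    ite_ite', Finset.mem_univ, if_true,
    Finset.sum_const, Finset.card_univ, Fintype.card_fin, nsmul_eq_mul]
  try simp only [hsw1, hsw2]
  try rw [show (∑ x : Fin N, ∑ y : Fin N, g y x * g y x)
      = ∑ x : Fin N, ∑ y : Fin N, g x y * g x y from Finset.sum_comm]
  try simp only [← Finset.mul_sum, ← Finset.sum_mul]
  ring

end PP

set_option maxHeartbeats 3200000 in
/-- at a one-loop fixed point,
`(N+2)(N+16)‖λ‖² ≥ 3 a₀(λ)(2N + 4 − a₀(λ))`. -/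
theorem fixedPoint_sqnorm_lower {N : ℕ} (hN : 1 ≤ N)
    (A : (Fin 4 → Fin N) → ℝ) (hA : IsSym4 A) (hfp : IsFixedPoint A) :
    3 * a0 A * (2 * (N : ℝ) + 4 - a0 A) ≤
      ((N : ℝ) + 2) * ((N : ℝ) + 16) * sqnorm A := by
  classical
  set n : ℝ := (N : ℝ) with hn
  set a : ℝ := a0 A with ha
  set T : ℝ := ∑ i : Fin N, ∑ j : Fin N, tmat A i j * tmat A i j with hT
  set S : ℝ := sqnorm A with hS
  -- trace of the matrix t equals a
  have htr : ∑ i : Fin N, tmat A i i = a := rfl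
  -- the trace identity: a = T + 2S
  have key1 : a = T + 2 * S := by
    have h : ∀ i j : Fin N, A ![i, i, j, j] =
        ∑ m : Fin N, ∑ n : Fin N,
          (A ![i, i, m, n] * A ![j, j, m, n] + A ![i, j, m, n] * A ![i, j, m, n]
            + A ![i, j, m, n] * A ![i, j, m, n]) := fun i j => hfp i i j j
    have hx : ∀ x m n : Fin N, A ![x, x, m, n] = A ![m, n, x, x] :=
      fun x m n => permRev hA m n x x
    calc a = ∑ i : Fin N, ∑ j : Fin N, A ![i, i, j, j] := rfl
      _ = ∑ i : Fin N, ∑ j : Fin N, ∑ m : Fin N, ∑ n : Fin N,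
          (A ![m, n, i, i] * A ![m, n, j, j] + A ![i, j, m, n] * A ![i, j, m, n]
            + A ![i, j, m, n] * A ![i, j, m, n]) := by
          refine Finset.sum_congr rfl fun i _ => Finset.sum_congr rfl fun j _ => ?_
          rw [h i j]
          exact Finset.sum_congr rfl fun m _ => Finset.sum_congr rfl fun nn _ => by
            rw [hx i m nn, hx j m nn]
      _ = T + 2 * S := by
          simp only [Finset.sum_add_distrib]
          rw [sum4_swap (fun i j m n => A ![m, n, i, i] * A ![m, n, j, j])]
          simp only [← Finset.mul_sum, ← Finset.sum_mul]
          simp only [hT, hS, sqnorm, tmat, pow_two]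
          ring
  -- the auxiliary symmetric matrix g
  set g : Fin N → Fin N → ℝ :=
    fun i j => (n+2) * tmat A i j - a/2 * (if i = j then 1 else 0) with hgdef
  have gsym : ∀ i j, g i j = g j i := by
    intro i j
    simp only [hgdef]
    rw [tmat_symm hA i j]
    congr 2
    by_cases h : i = j <;> simp [h, eq_comm]
  have hgt : ∑ i : Fin N, ∑ j : Fin N, tmat A i j * g i j = (n+2) * T - a/2 * a := by
    simp only [hgdef, mul_sub, mul_ite, ite_mul, mul_zero, mul_one,
      Finset.sum_sub_distrib, Finset.sum_ite_eq, Finset.sum_ite_eq', Finset.mem_univ, if_true,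
      Finset.sum_ite_irrel]
    simp only [← Finset.mul_sum, ← Finset.sum_mul]
    rw [htr]
    simp only [show ∀ x y : ℝ, x * ((n+2) * y) = (n+2) * (x*y) from fun x y => by ring]
    simp only [← Finset.mul_sum]
    rw [hT]
    ring
  have hgg : ∑ i : Fin N, ∑ j : Fin N, g i j * g i j
      = (n+2)^2 * T - (n+2) * a * a + n * (a/2) * (a/2) := by
    simp only [hgdef]
    simp only [show ∀ x y : ℝ, ((n+2) * x - a/2 * y) * ((n+2) * x - a/2 * y)
        = (n+2)^2 * (x*x) - (n+2)*a*(x*y) + (a/2)*(a/2)*(y*y) from fun x y => by ring]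
    simp only [mul_ite, ite_mul, mul_zero, mul_one, zero_mul, one_mul, ite_ite',
      Finset.sum_add_distrib, Finset.sum_sub_distrib, Finset.sum_ite_irrel,
      Finset.sum_ite_eq, Finset.sum_ite_eq', Finset.mem_univ, if_true,
      Finset.sum_const, Finset.card_univ, Fintype.card_fin, nsmul_eq_mul]
    simp only [← Finset.mul_sum, ← Finset.sum_mul]
    rw [htr, hT]
    rw [← hn]
    ring
  have htrg : ∑ i : Fin N, g i i = (n+2) * a - a/2 * n := by
    simp only [hgdef, if_true, mul_one, Finset.sum_sub_distrib]
    simp only [← Finset.mul_sum]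
    rw [htr]
    simp only [Finset.sum_const, Finset.card_univ, Fintype.card_fin, nsmul_eq_mul]
    ring
  -- the six contractions of A against g⊗δ terms
  have hAQ1 : ∑ i : Fin N, ∑ j : Fin N, ∑ k : Fin N, ∑ l : Fin N,
      A ![i,j,k,l] * (g i j * (if k = l then (1:ℝ) else 0))
      = ∑ i : Fin N, ∑ j : Fin N, tmat A i j * g i j := by
    simp only [tmat, mul_ite, ite_mul, mul_one, one_mul, mul_zero, zero_mul,
      Finset.sum_ite_irrel, Finset.sum_ite_eq, Finset.sum_ite_eq', Finset.mem_univ, if_true,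
      Finset.sum_const_zero]
    simp only [← Finset.mul_sum, ← Finset.sum_mul]
  have hAQ2 : ∑ i : Fin N, ∑ j : Fin N, ∑ k : Fin N, ∑ l : Fin N,
      A ![i,j,k,l] * ((if i = j then (1:ℝ) else 0) * g k l)
      = ∑ i : Fin N, ∑ j : Fin N, tmat A i j * g i j := by
    have e2 : ∀ x k l : Fin N, A ![x,x,k,l] = A ![k,l,x,x] := fun x k l => permRev hA k l x x
    simp only [mul_ite, ite_mul, mul_one, one_mul, mul_zero, zero_mul,
      Finset.sum_ite_irrel, Finset.sum_ite_eq, Finset.sum_ite_eq', Finset.mem_univ, if_true,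
      Finset.sum_const_zero]
    rw [show (∑ x : Fin N, ∑ k : Fin N, ∑ l : Fin N, A ![x,x,k,l] * g k l)
        = ∑ x : Fin N, ∑ k : Fin N, ∑ l : Fin N, A ![k,l,x,x] * g k l from
      Finset.sum_congr rfl fun x _ => Finset.sum_congr rfl fun k _ =>
        Finset.sum_congr rfl fun l _ => by rw [e2]]
    rw [sum3_rot (fun i k l => A ![k,l,i,i] * g k l)]
    simp only [← Finset.sum_mul, tmat]
  have hAQ3 : ∑ i : Fin N, ∑ j : Fin N, ∑ k : Fin N, ∑ l : Fin N,
      A ![i,j,k,l] * (g i k * (if j = l then (1:ℝ) else 0))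
      = ∑ i : Fin N, ∑ j : Fin N, tmat A i j * g i j := by
    have e3 : ∀ i j k : Fin N, A ![i,j,k,j] = A ![i,k,j,j] := fun i j k => swap12 hA i k j j
    simp only [mul_ite, ite_mul, mul_one, one_mul, mul_zero, zero_mul,
      Finset.sum_ite_irrel, Finset.sum_ite_eq, Finset.sum_ite_eq', Finset.mem_univ, if_true,
      Finset.sum_const_zero]
    rw [show (∑ i : Fin N, ∑ j : Fin N, ∑ k : Fin N, A ![i,j,k,j] * g i k)
        = ∑ i : Fin N, ∑ j : Fin N, ∑ k : Fin N, A ![i,k,j,j] * g i k from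
      Finset.sum_congr rfl fun x _ => Finset.sum_congr rfl fun k _ =>
        Finset.sum_congr rfl fun l _ => by rw [e3]]
    rw [sum3_mid (fun i j k => A ![i,k,j,j] * g i k)]
    simp only [← Finset.sum_mul, ← Finset.mul_sum, tmat]
  have hAQ4 : ∑ i : Fin N, ∑ j : Fin N, ∑ k : Fin N, ∑ l : Fin N,
      A ![i,j,k,l] * ((if i = k then (1:ℝ) else 0) * g j l)
      = ∑ i : Fin N, ∑ j : Fin N, tmat A i j * g i j := by
    have e4 : ∀ i j l : Fin N, A ![i,j,i,l] = A ![j,l,i,i] :=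
      fun i j l => (perm1302 hA i j i l).symm
    simp only [mul_ite, ite_mul, mul_one, one_mul, mul_zero, zero_mul,
      Finset.sum_ite_irrel, Finset.sum_ite_eq, Finset.sum_ite_eq', Finset.mem_univ, if_true,
      Finset.sum_const_zero]
    rw [show (∑ i : Fin N, ∑ j : Fin N, ∑ l : Fin N, A ![i,j,i,l] * g j l)
        = ∑ i : Fin N, ∑ j : Fin N, ∑ l : Fin N, A ![j,l,i,i] * g j l from
      Finset.sum_congr rfl fun x _ => Finset.sum_congr rfl fun k _ =>
        Finset.sum_congr rfl fun l _ => by rw [e4]]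
    rw [sum3_rot (fun i j l => A ![j,l,i,i] * g j l)]
    simp only [← Finset.sum_mul, ← Finset.mul_sum, tmat]
  have hAQ5 : ∑ i : Fin N, ∑ j : Fin N, ∑ k : Fin N, ∑ l : Fin N,
      A ![i,j,k,l] * (g i l * (if j = k then (1:ℝ) else 0))
      = ∑ i : Fin N, ∑ j : Fin N, tmat A i j * g i j := by
    have e5 : ∀ i j l : Fin N, A ![i,j,j,l] = A ![i,l,j,j] :=
      fun i j l => (perm0312 hA i j j l).symm
    simp only [mul_ite, ite_mul, mul_one, one_mul, mul_zero, zero_mul,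
      Finset.sum_ite_irrel, Finset.sum_ite_eq, Finset.sum_ite_eq', Finset.mem_univ, if_true,
      Finset.sum_const_zero]
    rw [show (∑ i : Fin N, ∑ j : Fin N, ∑ l : Fin N, A ![i,j,j,l] * g i l)
        = ∑ i : Fin N, ∑ j : Fin N, ∑ l : Fin N, A ![i,l,j,j] * g i l from
      Finset.sum_congr rfl fun x _ => Finset.sum_congr rfl fun k _ =>
        Finset.sum_congr rfl fun l _ => by rw [e5]]
    rw [sum3_mid (fun i j l => A ![i,l,j,j] * g i l)]
    simp only [← Finset.sum_mul, ← Finset.mul_sum, tmat]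
  have hAQ6 : ∑ i : Fin N, ∑ j : Fin N, ∑ k : Fin N, ∑ l : Fin N,
      A ![i,j,k,l] * ((if i = l then (1:ℝ) else 0) * g j k)
      = ∑ i : Fin N, ∑ j : Fin N, tmat A i j * g i j := by
    have e6 : ∀ i j k : Fin N, A ![i,j,k,i] = A ![j,k,i,i] :=
      fun i j k => (perm1203 hA i j k i).symm
    simp only [mul_ite, ite_mul, mul_one, one_mul, mul_zero, zero_mul,
      Finset.sum_ite_irrel, Finset.sum_ite_eq, Finset.sum_ite_eq', Finset.mem_univ, if_true,
      Finset.sum_const_zero]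
    rw [show (∑ i : Fin N, ∑ j : Fin N, ∑ k : Fin N, A ![i,j,k,i] * g j k)
        = ∑ i : Fin N, ∑ j : Fin N, ∑ k : Fin N, A ![j,k,i,i] * g j k from
      Finset.sum_congr rfl fun x _ => Finset.sum_congr rfl fun k _ =>
        Finset.sum_congr rfl fun l _ => by rw [e6]]
    rw [sum3_rot (fun i j k => A ![j,k,i,i] * g j k)]
    simp only [← Finset.sum_mul, ← Finset.mul_sum, tmat]
  -- value of the square-norm sum
  have hSS : ∑ i : Fin N, ∑ j : Fin N, ∑ k : Fin N, ∑ l : Fin N,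
      A ![i,j,k,l] * A ![i,j,k,l] = S := by
    rw [hS, sqnorm]
    simp only [pow_two]
  -- pointwise expansion of the square of B = c·A − Q
  have hpoint : ∀ i j k l : Fin N,
      (((n+2)*(n+4)) * A ![i,j,k,l]
        - ((g i j * (if k = l then (1:ℝ) else 0) + (if i = j then (1:ℝ) else 0) * g k l)
          + (g i k * (if j = l then (1:ℝ) else 0) + (if i = k then (1:ℝ) else 0) * g j l)
          + (g i l * (if j = k then (1:ℝ) else 0) + (if i = l then (1:ℝ) else 0) * g j k)))^2
      = ((n+2)*(n+4))^2 * (A ![i,j,k,l] * A ![i,j,k,l])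
        - (2*((n+2)*(n+4))) * (A ![i,j,k,l] * (g i j * (if k = l then (1:ℝ) else 0)))
        - (2*((n+2)*(n+4))) * (A ![i,j,k,l] * ((if i = j then (1:ℝ) else 0) * g k l))
        - (2*((n+2)*(n+4))) * (A ![i,j,k,l] * (g i k * (if j = l then (1:ℝ) else 0)))
        - (2*((n+2)*(n+4))) * (A ![i,j,k,l] * ((if i = k then (1:ℝ) else 0) * g j l))
        - (2*((n+2)*(n+4))) * (A ![i,j,k,l] * (g i l * (if j = k then (1:ℝ) else 0)))
        - (2*((n+2)*(n+4))) * (A ![i,j,k,l] * ((if i = l then (1:ℝ) else 0) * g j k))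
        + (g i j * (if k = l then (1:ℝ) else 0) + (if i = j then (1:ℝ) else 0) * g k l)
          * (g i j * (if k = l then (1:ℝ) else 0) + (if i = j then (1:ℝ) else 0) * g k l)
        + (g i k * (if j = l then (1:ℝ) else 0) + (if i = k then (1:ℝ) else 0) * g j l)
          * (g i k * (if j = l then (1:ℝ) else 0) + (if i = k then (1:ℝ) else 0) * g j l)
        + (g i l * (if j = k then (1:ℝ) else 0) + (if i = l then (1:ℝ) else 0) * g j k)
          * (g i l * (if j = k then (1:ℝ) else 0) + (if i = l then (1:ℝ) else 0) * g j k)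
        + 2 * ((g i j * (if k = l then (1:ℝ) else 0) + (if i = j then (1:ℝ) else 0) * g k l)
          * (g i k * (if j = l then (1:ℝ) else 0) + (if i = k then (1:ℝ) else 0) * g j l))
        + 2 * ((g i j * (if k = l then (1:ℝ) else 0) + (if i = j then (1:ℝ) else 0) * g k l)
          * (g i l * (if j = k then (1:ℝ) else 0) + (if i = l then (1:ℝ) else 0) * g j k))
        + 2 * ((g i k * (if j = l then (1:ℝ) else 0) + (if i = k then (1:ℝ) else 0) * g j l)
          * (g i l * (if j = k then (1:ℝ) else 0) + (if i = l then (1:ℝ) else 0) * g j k)) := by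
    intros; ring
  have key2 : 0 ≤ (n+2)^2*(n+4)^2 * S - 6*(n+4)*(n+2)^2 * T + 3*(n+2)*(n+4)*a^2 := by
    have hBpos : (0:ℝ) ≤ ∑ i : Fin N, ∑ j : Fin N, ∑ k : Fin N, ∑ l : Fin N,
        (((n+2)*(n+4)) * A ![i,j,k,l]
          - ((g i j * (if k = l then (1:ℝ) else 0) + (if i = j then (1:ℝ) else 0) * g k l)
            + (g i k * (if j = l then (1:ℝ) else 0) + (if i = k then (1:ℝ) else 0) * g j l)
            + (g i l * (if j = k then (1:ℝ) else 0) + (if i = l then (1:ℝ) else 0) * g j k)))^2 :=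
      Finset.sum_nonneg fun i _ => Finset.sum_nonneg fun j _ => Finset.sum_nonneg fun k _ =>
        Finset.sum_nonneg fun l _ => sq_nonneg _
    refine le_of_le_of_eq hBpos ?_
    simp only [hpoint]
    simp only [Finset.sum_add_distrib, Finset.sum_sub_distrib, ← Finset.mul_sum]
    rw [hAQ1, hAQ2, hAQ3, hAQ4, hAQ5, hAQ6, hSS,
      sumP11 g, sumP22 g, sumP33 g, sumP12 g gsym, sumP13 g gsym, sumP23 g gsym]
    simp only [hgt, hgg, htrg]
    rw [← hn]
    ring
  -- final arithmetic
  have hTe : T = a - 2*S := by linarith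
  rw [hTe] at key2
  have key3 : 0 ≤ ((n+2)*(n+4)) * ((n+2)*(n+16)*S - (6*(n+2)*a - 3*a^2)) := by linarith
  have hn1 : (1:ℝ) ≤ n := by rw [hn]; exact_mod_cast hN
  have hfac : 0 < (n+2)*(n+4) := by nlinarith
  nlinarith [key3, hfac]
end
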